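/- arXiv:2308.04540 — 6 statements merged into one kernel-verified Lean document; each statement's English description precedes it below -/
import Mathlib

section
/- Let (X,T) be a compact metric dynamical system with a continuous surjection T, and let μ and ν be two distinct T-invariant ergodic Borel probability measures on X, both with full topological support. Then there exist a dense G_δ set B ⊆ X and a continuous function f : X → ℝ such that for every x ∈ B the ergodic averages A_n(f,x) = (1/n) ∑_{i=0}^{n-1} f(T^i x) do not converge (in fact, lim sup_n A_n(f,x) > 1 and lim inf_n A_n(f,x) < 0). -/
open MeasureTheory Filter Topology
open scoped ENNReal NNReal

lemma limsup_eq_of_tendsto_sub {u v : ℕ → ℝ} {M : ℝ}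
    (hu : ∀ n, |u n| ≤ M) (hv : ∀ n, |v n| ≤ M)
    (h : Tendsto (fun n => u n - v n) atTop (nhds 0)) :
    limsup u atTop = limsup v atTop := by
  have key : ∀ (a b : ℕ → ℝ), (∀ n, |a n| ≤ M) → (∀ n, |b n| ≤ M) →
      Tendsto (fun n => a n - b n) atTop (nhds 0) → limsup a atTop ≤ limsup b atTop := by
    intro a b ha hb hab
    have h1 : limsup a atTop = limsup ((fun n => a n - b n) + b) atTop := by
      congr 1; funext n; simp
    rw [h1]
    have h2 := limsup_add_le (f := atTop) (u := fun n => a n - b n) (v := b)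
      (hab.isBoundedUnder_ge) (hab.isBoundedUnder_le)
      ((isBoundedUnder_of ⟨-M, fun (n : ℕ) => (abs_le.1 (hb n)).1⟩ :
        IsBoundedUnder (· ≥ ·) atTop b).isCoboundedUnder_le)
      (isBoundedUnder_of ⟨M, fun (n : ℕ) => (abs_le.1 (hb n)).2⟩)
    have h3 : limsup (fun n => a n - b n) atTop = 0 := hab.limsup_eq
    rw [h3, zero_add] at h2
    exact h2
  refine le_antisymm (key u v hu hv h) (key v u hv hu ?_)
  have : (fun n => v n - u n) = fun n => -(u n - v n) := by funext n; ring
  rw [this]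
  simpa using h.neg

lemma aux_dense {X : Type*} [MetricSpace X] [CompactSpace X] [MeasurableSpace X] [BorelSpace X]
    (T : X → X) (hTc : Continuous T)
    (ρ : Measure X) [IsProbabilityMeasure ρ] [ρ.IsOpenPosMeasure]
    (hρ : Ergodic T ρ) (g : C(X, ℝ)) (t : ℝ) (ht : t < ∫ x, g x ∂ρ) (N : ℕ) :
    IsOpen {x | ∃ n, N ≤ n ∧ t < (∑ i ∈ Finset.range n, g (T^[i] x)) / (n : ℝ)} ∧
    Dense {x | ∃ n, N ≤ n ∧ t < (∑ i ∈ Finset.range n, g (T^[i] x)) / (n : ℝ)} := by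
  classical
  set c : ℝ := ∫ x, g x ∂ρ with hc
  set M : ℝ := ‖BoundedContinuousFunction.mkOfCompact g‖ with hMdef
  have hM : ∀ x, |g x| ≤ M := fun x => by
    simpa [Real.norm_eq_abs, hMdef] using (BoundedContinuousFunction.mkOfCompact g).norm_coe_le_norm x
  set A : ℕ → X → ℝ := fun n x => (∑ i ∈ Finset.range n, g (T^[i] x)) / (n : ℝ) with hA
  have hAcont : ∀ n, Continuous (A n) := fun n =>
    (continuous_finset_sum _ fun i _ => g.continuous.comp (hTc.iterate i)).div_const _
  have hint : ∀ (h : X → ℝ), Continuous h → Integrable h ρ := fun h hh =>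
    (BoundedContinuousFunction.mkOfCompact ⟨h, hh⟩).integrable ρ
  have hM0 : 0 ≤ M := hMdef ▸ norm_nonneg _
  have hAbd : ∀ n x, |A n x| ≤ M := by
    intro n x
    rcases Nat.eq_zero_or_pos n with rfl | hn
    · simpa [hA] using hM0
    · have hn' : (0:ℝ) < n := by exact_mod_cast hn
      rw [hA]
      simp only
      rw [abs_div, abs_of_pos hn', div_le_iff₀ hn']
      calc |∑ i ∈ Finset.range n, g (T^[i] x)|
          ≤ ∑ i ∈ Finset.range n, |g (T^[i] x)| := Finset.abs_sum_le_sum_abs _ _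
        _ ≤ ∑ _i ∈ Finset.range n, M := Finset.sum_le_sum fun i _ => hM _
        _ = M * n := by simp [mul_comm]
  have hcM : c ≤ M := by
    rw [hc]
    calc ∫ x, g x ∂ρ ≤ ∫ _x, M ∂ρ :=
          integral_mono (hint g g.continuous) (integrable_const M)
            (fun x => (abs_le.1 (hM x)).2)
      _ = M := by simp
  have hcomp : ∀ i : ℕ, ∫ x, g (T^[i] x) ∂ρ = c := by
    intro i
    have h1 : MeasurePreserving T^[i] ρ ρ := hρ.toMeasurePreserving.iterate i
    calc ∫ x, g (T^[i] x) ∂ρ = ∫ y, g y ∂(Measure.map T^[i] ρ) :=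
          (integral_map ((hTc.iterate i).measurable.aemeasurable)
            (g.continuous.aestronglyMeasurable)).symm
      _ = c := by rw [h1.map_eq]
  have hIA : ∀ n : ℕ, 1 ≤ n → ∫ x, A n x ∂ρ = c := by
    intro n hn
    have hn' : (n:ℝ) ≠ 0 := by positivity
    rw [hA]
    simp only
    rw [integral_div, integral_finset_sum (Finset.range n)
      (f := fun i (x : X) => g (T^[i] x))
      (fun i _ => hint (fun x => g (T^[i] x)) (g.continuous.comp (hTc.iterate i)))]
    simp only [hcomp, Finset.sum_const, Finset.card_range, nsmul_eq_mul]
    field_simp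
  set s : ℝ := (t + c) / 2 with hs
  have hts : t < s := by rw [hs]; linarith
  have hsc : s < c := by rw [hs]; linarith
  have hsM : s < M := lt_of_lt_of_le hsc hcM
  set ε : ℝ≥0∞ := ENNReal.ofReal ((c - s) / (M - s)) with hε
  have hε0 : 0 < ε := ENNReal.ofReal_pos.2 (div_pos (by linarith) (by linarith))
  have hUopen : ∀ n, IsOpen {x | s < A n x} :=
    fun n => isOpen_lt continuous_const (hAcont n)
  have hU : ∀ n : ℕ, 1 ≤ n → ε ≤ ρ {x | s < A n x} := by
    intro n hn
    have key : c ≤ s + (M - s) * (ρ {x | s < A n x}).toReal := by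
      have hle : ∀ x, A n x ≤ s + Set.indicator {x | s < A n x} (fun _ => M - s) x := by
        intro x
        by_cases hx : x ∈ {x | s < A n x}
        · rw [Set.indicator_of_mem hx]
          have := (abs_le.1 (hAbd n x)).2
          linarith
        · rw [Set.indicator_of_notMem hx]
          have : ¬ s < A n x := hx
          push_neg at this
          linarith
      have hiint : Integrable (fun x => s + Set.indicator {x | s < A n x} (fun _ => M - s) x) ρ :=
        (integrable_const s).add
          ((integrable_const (M - s)).indicator (hUopen n).measurableSet)
      calc c = ∫ x, A n x ∂ρ := (hIA n hn).symm
        _ ≤ ∫ x, (s + Set.indicator {x | s < A n x} (fun _ => M - s) x) ∂ρ :=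
            integral_mono (hint _ (hAcont n)) hiint hle
        _ = s + (M - s) * (ρ {x | s < A n x}).toReal := by
            rw [integral_add (integrable_const s)
              ((integrable_const (M - s)).indicator (hUopen n).measurableSet),
              integral_const, integral_indicator_const _ (hUopen n).measurableSet]
            simp [smul_eq_mul, mul_comm, measureReal_def]
    have h1 : (c - s) / (M - s) ≤ (ρ {x | s < A n x}).toReal := by
      rw [div_le_iff₀ (by linarith : (0:ℝ) < M - s)]
      linarith [key]
    exact ENNReal.ofReal_le_of_le_toReal h1
  have hUbd : ∀ x, IsBoundedUnder (· ≤ ·) atTop (fun n => A n x) :=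
    fun x => isBoundedUnder_of ⟨M, fun (n : ℕ) => (abs_le.1 (hAbd n x)).2⟩
  have hLbd : ∀ x, IsBoundedUnder (· ≥ ·) atTop (fun n => A n x) :=
    fun x => isBoundedUnder_of ⟨-M, fun (n : ℕ) => (abs_le.1 (hAbd n x)).1⟩
  set S : Set X := {x | s ≤ limsup (fun n => A n x) atTop} with hSdef
  have hmeas : MeasurableSet S := by
    have : Measurable fun x => limsup (fun n => A n x) atTop :=
      Measurable.limsup fun n => (hAcont n).measurable
    exact measurableSet_le measurable_const this
  -- sum splitting
  have hsum : ∀ (x : X) (n : ℕ), ∑ i ∈ Finset.range (n+1), g (T^[i] x)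
      = (∑ i ∈ Finset.range n, g (T^[i] (T x))) + g x := by
    intro x n
    rw [Finset.sum_range_succ']
    simp [Function.iterate_succ_apply]
  have hlimsup_T : ∀ x, limsup (fun n => A n (T x)) atTop = limsup (fun n => A n x) atTop := by
    intro x
    have e1 : limsup (fun n => A n x) atTop = limsup (fun n => A (n+1) x) atTop :=
      (limsup_nat_add (fun n => A n x) 1).symm
    rw [e1]
    refine limsup_eq_of_tendsto_sub (fun n => hAbd n (T x)) (fun n => hAbd (n+1) x) ?_
    have heq : ∀ n : ℕ, 1 ≤ n → A n (T x) - A (n+1) x = (A n (T x) - g x) / ((n:ℝ)+1) := by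
      intro n hn
      have hn' : (n:ℝ) ≠ 0 := by positivity
      have hn1 : ((n:ℝ)+1) ≠ 0 := by positivity
      rw [hA]
      simp only
      rw [hsum x n]
      push_cast
      field_simp
      ring
    apply squeeze_zero_norm' (a := fun n : ℕ => (2*M) / ((n:ℝ)+1))
    · filter_upwards [eventually_ge_atTop 1] with n hn
      rw [heq n hn]
      have h1 : |A n (T x) - g x| ≤ 2 * M := by
        calc |A n (T x) - g x| ≤ |A n (T x)| + |g x| := abs_sub _ _
          _ ≤ M + M := add_le_add (hAbd n (T x)) (hM x)
          _ = 2 * M := by ring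
      rw [Real.norm_eq_abs, abs_div, abs_of_pos (by positivity : (0:ℝ) < (n:ℝ)+1)]
      exact div_le_div_of_nonneg_right h1 (by positivity) |>.trans_eq rfl
    · have : Tendsto (fun n : ℕ => (2*M) / ((n:ℝ)+1)) atTop (nhds 0) := by
        have h0 := tendsto_const_div_atTop_nhds_zero_nat (2*M)
        have h1 := h0.comp (tendsto_add_atTop_nat 1)
        refine h1.congr fun n => ?_
        simp only [Function.comp_apply]
        push_cast
        ring
      exact this
  have hinv : T ⁻¹' S = S := by
    ext x
    simp only [hSdef, Set.mem_preimage, Set.mem_setOf_eq, hlimsup_T x]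
  have hSfull : ρ S = 1 := by
    rcases hρ.toPreErgodic.prob_eq_zero_or_one hmeas hinv with h0 | h1
    · exfalso
      set V : ℕ → Set X := fun N => ⋃ n, ⋃ (_ : N + 1 ≤ n), {x | s < A n x} with hV
      have hVopen : ∀ N, IsOpen (V N) := fun N =>
        isOpen_iUnion fun n => isOpen_iUnion fun _ => hUopen n
      have hVanti : Antitone V := by
        intro a b hab
        refine Set.iUnion₂_subset fun n hn => ?_
        exact Set.subset_iUnion₂ (s := fun n _ => {x | s < A n x}) n (le_trans (by omega) hn)
      have hVε : ∀ N, ε ≤ ρ (V N) := by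
        intro N
        refine le_trans (hU (N+1) (by omega)) (measure_mono ?_)
        exact Set.subset_iUnion₂ (s := fun n _ => {x | s < A n x}) (N+1) le_rfl
      have hsub : (⋂ N, V N) ⊆ S := by
        intro x hx
        have hfreq : ∃ᶠ n in atTop, s ≤ A n x := by
          rw [frequently_atTop]
          intro a
          have := Set.mem_iInter.1 hx a
          simp only [hV, Set.mem_iUnion, Set.mem_setOf_eq] at this
          obtain ⟨n, hn1, hn2⟩ := this
          exact ⟨n, by omega, hn2.le⟩
        exact le_limsup_of_frequently_le hfreq (hUbd x)
      have htend : Tendsto (ρ ∘ V) atTop (nhds (ρ (⋂ N, V N))) :=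
        tendsto_measure_iInter_atTop
          (fun N => (hVopen N).measurableSet.nullMeasurableSet) hVanti
          ⟨0, measure_ne_top _ _⟩
      have hIε : ε ≤ ρ (⋂ N, V N) :=
        ge_of_tendsto htend (Eventually.of_forall fun N => hVε N)
      have : ε ≤ ρ S := le_trans hIε (measure_mono hsub)
      rw [h0] at this
      exact hε0.ne' (le_antisymm this zero_le)
    · exact h1
  -- conclusion
  set O : Set X := {x | ∃ n, N ≤ n ∧ t < A n x} with hO
  have hOopen : IsOpen O := by
    have : O = ⋃ n, ⋃ (_ : N ≤ n), {x | t < A n x} := by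
      ext x
      simp [hO, Set.mem_iUnion]
    rw [this]
    exact isOpen_iUnion fun n => isOpen_iUnion fun _ =>
      isOpen_lt continuous_const (hAcont n)
  have hSO : S ⊆ O := by
    intro x hx
    have hlt : t < limsup (fun n => A n x) atTop := lt_of_lt_of_le hts hx
    have hfreq : ∃ᶠ n in atTop, t < A n x :=
      frequently_lt_of_lt_limsup ((hLbd x).isCoboundedUnder_le) hlt
    obtain ⟨n, hn1, hn2⟩ := frequently_atTop.1 hfreq N
    exact ⟨n, hn1, hn2⟩
  have hOfull : ρ O = 1 := le_antisymm prob_le_one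
    (by rw [← hSfull]; exact measure_mono hSO)
  have hdense : Dense O := by
    rw [dense_iff_inter_open]
    intro U hUo hUne
    by_contra hcon
    rw [Set.not_nonempty_iff_eq_empty] at hcon
    have hUsub : U ⊆ Oᶜ := by
      intro y hy
      intro hyO
      exact Set.eq_empty_iff_forall_notMem.1 hcon y ⟨hy, hyO⟩
    have h1 : ρ Oᶜ = 0 := by
      rw [measure_compl hOopen.measurableSet (measure_ne_top _ _), hOfull, measure_univ]
      simp
    have h2 : 0 < ρ U := hUo.measure_pos ρ hUne
    have h3 : ρ U ≤ 0 := h1 ▸ measure_mono hUsub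
    exact absurd (lt_of_lt_of_le h2 h3) (by simp)
  exact ⟨hOopen, hdense⟩

lemma exists_separating_fun {X : Type*} [MetricSpace X] [CompactSpace X] [MeasurableSpace X]
    [BorelSpace X] (μ ν : Measure X) [IsProbabilityMeasure μ] [IsProbabilityMeasure ν]
    (hμν : μ ≠ ν) : ∃ f : C(X, ℝ), (∫ x, f x ∂μ) = 2 ∧ (∫ x, f x ∂ν) = -1 := by
  have hex : ¬ ∀ (g : BoundedContinuousFunction X ℝ≥0), ∫⁻ x, g x ∂μ = ∫⁻ x, g x ∂ν := fun h =>
    hμν (ext_of_forall_lintegral_eq_of_IsFiniteMeasure h)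
  push_neg at hex
  obtain ⟨g, hg⟩ := hex
  have hgc : Continuous fun x => ((g x : ℝ≥0) : ℝ) :=
    NNReal.continuous_coe.comp g.continuous
  have hintμ : Integrable (fun x => ((g x : ℝ≥0) : ℝ)) μ :=
    (BoundedContinuousFunction.mkOfCompact ⟨fun x => ((g x : ℝ≥0) : ℝ), hgc⟩).integrable μ
  have hintν : Integrable (fun x => ((g x : ℝ≥0) : ℝ)) ν :=
    (BoundedContinuousFunction.mkOfCompact ⟨fun x => ((g x : ℝ≥0) : ℝ), hgc⟩).integrable ν
  set Iμ : ℝ := ∫ x, ((g x : ℝ≥0) : ℝ) ∂μ with hIμ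
  set Iν : ℝ := ∫ x, ((g x : ℝ≥0) : ℝ) ∂ν with hIν
  have hne : Iμ ≠ Iν := by
    intro h
    apply hg
    rw [lintegral_coe_eq_integral _ hintμ, lintegral_coe_eq_integral _ hintν, ← hIμ, ← hIν, h]
  set a : ℝ := 3 / (Iμ - Iν) with ha
  set b : ℝ := 2 - a * Iμ with hb
  refine ⟨⟨fun x => a * ((g x : ℝ≥0) : ℝ) + b, (continuous_const.mul hgc).add continuous_const⟩,
    ?_, ?_⟩
  · show (∫ x, (a * ((g x : ℝ≥0) : ℝ) + b) ∂μ) = 2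
    rw [integral_add (hintμ.const_mul a) (integrable_const b), integral_const_mul a,
      integral_const]
    simp only [measureReal_def, measure_univ, ENNReal.toReal_one, smul_eq_mul, one_mul, ← hIμ, hb]
    ring
  · show (∫ x, (a * ((g x : ℝ≥0) : ℝ) + b) ∂ν) = -1
    rw [integral_add (hintν.const_mul a) (integrable_const b), integral_const_mul a,
      integral_const]
    simp only [measureReal_def, measure_univ, ENNReal.toReal_one, smul_eq_mul, one_mul, ← hIν, hb]
    have : a * (Iμ - Iν) = 3 := div_mul_cancel₀ 3 (sub_ne_zero.2 hne)
    nlinarith [this]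

theorem stmt0 {X : Type*} [MetricSpace X] [CompactSpace X] [MeasurableSpace X] [BorelSpace X]
    (T : X → X) (hTc : Continuous T) (hTs : Function.Surjective T)
    (μ ν : Measure X) [IsProbabilityMeasure μ] [IsProbabilityMeasure ν]
    (hμ : Ergodic T μ) (hν : Ergodic T ν) (hμν : μ ≠ ν)
    [μ.IsOpenPosMeasure] [ν.IsOpenPosMeasure] :
    ∃ (B : Set X) (f : C(X, ℝ)), IsGδ B ∧ Dense B ∧
      ∀ x ∈ B,
        1 < Filter.limsup (fun n : ℕ => (∑ i ∈ Finset.range n, f (T^[i] x)) / (n : ℝ)) atTop ∧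
        Filter.liminf (fun n : ℕ => (∑ i ∈ Finset.range n, f (T^[i] x)) / (n : ℝ)) atTop < 0 := by
  obtain ⟨f, hfμ, hfν⟩ := exists_separating_fun μ ν hμν
  have hμ32 : (3/2 : ℝ) < ∫ x, f x ∂μ := by rw [hfμ]; norm_num
  have hν12 : (1/2 : ℝ) < ∫ x, (-f : C(X, ℝ)) x ∂ν := by
    simp only [ContinuousMap.coe_neg, Pi.neg_apply]
    rw [integral_neg, hfν]
    norm_num
  have h1 := fun N => aux_dense T hTc μ hμ f (3/2) hμ32 N
  have h2 := fun N => aux_dense T hTc ν hν (-f) (1/2) hν12 N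
  set O1 : ℕ → Set X :=
    fun N => {x | ∃ n, N ≤ n ∧ 3/2 < (∑ i ∈ Finset.range n, f (T^[i] x)) / (n : ℝ)} with hO1
  set O2 : ℕ → Set X :=
    fun N => {x | ∃ n, N ≤ n ∧ 1/2 < (∑ i ∈ Finset.range n, (-f : C(X, ℝ)) (T^[i] x)) / (n : ℝ)}
    with hO2
  refine ⟨⋂ N, (O1 N ∩ O2 N), f, ?_, ?_, ?_⟩
  · exact IsGδ.iInter_of_isOpen fun N => ((h1 N).1.inter (h2 N).1)
  · exact dense_iInter_of_isOpen (fun N => (h1 N).1.inter (h2 N).1)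
      (fun N => Dense.inter_of_isOpen_left (h1 N).2 (h2 N).2 (h1 N).1)
  · intro x hx
    set M : ℝ := ‖BoundedContinuousFunction.mkOfCompact f‖ with hMdef
    have hM : ∀ y, |f y| ≤ M := fun y => by
      simpa [Real.norm_eq_abs, hMdef] using (BoundedContinuousFunction.mkOfCompact f).norm_coe_le_norm y
    have hM0 : 0 ≤ M := hMdef ▸ norm_nonneg _
    set A : ℕ → ℝ := fun n => (∑ i ∈ Finset.range n, f (T^[i] x)) / (n : ℝ) with hA
    have hAbd : ∀ n, |A n| ≤ M := by
      intro n
      rcases Nat.eq_zero_or_pos n with rfl | hn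
      · simpa [hA] using hM0
      · have hn' : (0:ℝ) < n := by exact_mod_cast hn
        rw [hA]
        simp only
        rw [abs_div, abs_of_pos hn', div_le_iff₀ hn']
        calc |∑ i ∈ Finset.range n, f (T^[i] x)|
            ≤ ∑ i ∈ Finset.range n, |f (T^[i] x)| := Finset.abs_sum_le_sum_abs _ _
          _ ≤ ∑ _i ∈ Finset.range n, M := Finset.sum_le_sum fun i _ => hM _
          _ = M * n := by simp [mul_comm]
    have hUbd : IsBoundedUnder (· ≤ ·) atTop A :=
      isBoundedUnder_of ⟨M, fun (n : ℕ) => (abs_le.1 (hAbd n)).2⟩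
    have hLbd : IsBoundedUnder (· ≥ ·) atTop A :=
      isBoundedUnder_of ⟨-M, fun (n : ℕ) => (abs_le.1 (hAbd n)).1⟩
    have hx1 : ∀ N : ℕ, ∃ n, N ≤ n ∧ 3/2 < A n := fun N => (Set.mem_iInter.1 hx N).1
    have hx2 : ∀ N : ℕ, ∃ n, N ≤ n ∧ A n < -(1/2) := by
      intro N
      obtain ⟨n, hn1, hn2⟩ := (Set.mem_iInter.1 hx N).2
      refine ⟨n, hn1, ?_⟩
      have : (∑ i ∈ Finset.range n, (-f : C(X, ℝ)) (T^[i] x)) = -∑ i ∈ Finset.range n, f (T^[i] x) := by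
        simp
      rw [this, neg_div] at hn2
      rw [hA]
      simp only
      linarith
    constructor
    · have hfreq : ∃ᶠ n in atTop, (3/2 : ℝ) ≤ A n := by
        rw [frequently_atTop]
        intro a
        obtain ⟨n, hn1, hn2⟩ := hx1 a
        exact ⟨n, hn1, hn2.le⟩
      have := le_limsup_of_frequently_le hfreq hUbd
      calc (1:ℝ) < 3/2 := by norm_num
        _ ≤ _ := this
    · have hfreq : ∃ᶠ n in atTop, A n ≤ -(1/2 : ℝ) := by
        rw [frequently_atTop]
        intro a
        obtain ⟨n, hn1, hn2⟩ := hx2 a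
        exact ⟨n, hn1, hn2.le⟩
      have := liminf_le_of_frequently_le hfreq hLbd
      calc liminf A atTop ≤ -(1/2 : ℝ) := this
        _ < 0 := by norm_num
end

section
/- Let M be a nonempty compact convex subset of a locally convex metric space whose metric d is convex, and let T : M → M be a continuous affine map. Then the set M_T of T-fixed points is nonempty, and for every ε > 0 there exists n_ε such that for all ν ∈ M and all n ≥ n_ε, d((1/n) ∑_{i=0}^{n-1} T^i(ν), M_T) < ε. -/
open MeasureTheory Filter Topology

private lemma avg_succ_eq {E : Type*} [AddCommGroup E] [Module ℝ E]
    (f : ℕ → E) (n : ℕ) (hn : n ≠ 0) :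
    ((n:ℝ)+1)⁻¹ • ∑ i ∈ Finset.range (n+1), f i
      = ((n:ℝ)/((n:ℝ)+1)) • ((n:ℝ)⁻¹ • ∑ i ∈ Finset.range n, f i)
        + (1 - (n:ℝ)/((n:ℝ)+1)) • f n := by
  have hn' : (n:ℝ) ≠ 0 := Nat.cast_ne_zero.2 hn
  have hn1 : (n:ℝ)+1 ≠ 0 := by positivity
  have e1 : ((n:ℝ)/((n:ℝ)+1)) * (n:ℝ)⁻¹ = ((n:ℝ)+1)⁻¹ := by field_simp
  have e2 : 1 - (n:ℝ)/((n:ℝ)+1) = ((n:ℝ)+1)⁻¹ := by field_simp; ring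
  rw [Finset.sum_range_succ, smul_add, smul_smul, e1, e2]

theorem stmt2 {E : Type*} [AddCommGroup E] [Module ℝ E] [MetricSpace E]
    [IsTopologicalAddGroup E] [ContinuousSMul ℝ E] [LocallyConvexSpace ℝ E]
    (hconvd : ∀ t ∈ Set.Icc (0:ℝ) 1, ∀ a b c d : E,
      dist (t • a + (1 - t) • b) (t • c + (1 - t) • d) ≤ t * dist a c + (1 - t) * dist b d)
    (M : Set E) (hMne : M.Nonempty) (hMc : IsCompact M) (hMconv : Convex ℝ M)
    (T : E → E) (hTm : Set.MapsTo T M M) (hTc : ContinuousOn T M)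
    (hTaff : ∀ t ∈ Set.Icc (0:ℝ) 1, ∀ a ∈ M, ∀ b ∈ M,
      T (t • a + (1 - t) • b) = t • T a + (1 - t) • T b) :
    {x ∈ M | T x = x}.Nonempty ∧
      ∀ ε > 0, ∃ n₀ : ℕ, ∀ ν ∈ M, ∀ n ≥ n₀,
        Metric.infDist ((n : ℝ)⁻¹ • ∑ i ∈ Finset.range n, T^[i] ν) {x ∈ M | T x = x} < ε := by
  set F : Set E := {x ∈ M | T x = x} with hF
  -- t = n/(n+1) is in [0,1]
  have htmem : ∀ n : ℕ, ((n:ℝ)/((n:ℝ)+1)) ∈ Set.Icc (0:ℝ) 1 := by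
    intro n
    constructor
    · positivity
    · rw [div_le_one (by positivity)]; linarith
  -- averages of points of M are in M
  have avg_mem : ∀ (a : ℕ → E), (∀ i, a i ∈ M) → ∀ n : ℕ, n ≠ 0 →
      ((n:ℝ)⁻¹ • ∑ i ∈ Finset.range n, a i) ∈ M := by
    intro a ha n hn
    rw [Finset.smul_sum]
    refine hMconv.sum_mem (fun i _ => by positivity) ?_ (fun i _ => ha i)
    rw [Finset.sum_const, Finset.card_range, nsmul_eq_mul]
    field_simp
  -- convexity of the metric for averages
  have dist_avg : ∀ (a b : ℕ → E), ∀ n : ℕ, n ≠ 0 →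
      dist ((n:ℝ)⁻¹ • ∑ i ∈ Finset.range n, a i) ((n:ℝ)⁻¹ • ∑ i ∈ Finset.range n, b i)
        ≤ (n:ℝ)⁻¹ * ∑ i ∈ Finset.range n, dist (a i) (b i) := by
    intro a b n
    induction n with
    | zero => intro h; exact absurd rfl h
    | succ n ih =>
      intro _
      rcases Nat.eq_zero_or_pos n with h0 | hpos
      · subst h0; simp
      · have hn : n ≠ 0 := Nat.pos_iff_ne_zero.mp hpos
        have hcast : ((n+1:ℕ):ℝ) = (n:ℝ)+1 := by push_cast; ring
        rw [hcast, avg_succ_eq a n hn, avg_succ_eq b n hn]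
        have ht := htmem n
        have ht0 : (0:ℝ) ≤ (n:ℝ)/((n:ℝ)+1) := ht.1
        calc dist _ _
            ≤ ((n:ℝ)/((n:ℝ)+1)) * dist ((n:ℝ)⁻¹ • ∑ i ∈ Finset.range n, a i)
                ((n:ℝ)⁻¹ • ∑ i ∈ Finset.range n, b i)
              + (1 - (n:ℝ)/((n:ℝ)+1)) * dist (a n) (b n) := hconvd _ ht _ _ _ _
          _ ≤ ((n:ℝ)/((n:ℝ)+1)) * ((n:ℝ)⁻¹ * ∑ i ∈ Finset.range n, dist (a i) (b i))
              + (1 - (n:ℝ)/((n:ℝ)+1)) * dist (a n) (b n) := by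
                gcongr
                exact ih hn
          _ = ((n:ℝ)+1)⁻¹ * ∑ i ∈ Finset.range (n+1), dist (a i) (b i) := by
                rw [Finset.sum_range_succ]
                have hn' : (n:ℝ) ≠ 0 := Nat.cast_ne_zero.2 hn
                field_simp
                ring
  -- T maps averages of points of M to averages of images
  have aff_avg : ∀ (a : ℕ → E), (∀ i, a i ∈ M) → ∀ n : ℕ, n ≠ 0 →
      T ((n:ℝ)⁻¹ • ∑ i ∈ Finset.range n, a i)
        = (n:ℝ)⁻¹ • ∑ i ∈ Finset.range n, T (a i) := by
    intro a ha n
    induction n with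
    | zero => intro h; exact absurd rfl h
    | succ n ih =>
      intro _
      rcases Nat.eq_zero_or_pos n with h0 | hpos
      · subst h0; simp
      · have hn : n ≠ 0 := Nat.pos_iff_ne_zero.mp hpos
        have hcast : ((n+1:ℕ):ℝ) = (n:ℝ)+1 := by push_cast; ring
        rw [hcast, avg_succ_eq a n hn, avg_succ_eq (fun i => T (a i)) n hn,
          hTaff _ (htmem n) _ (avg_mem a ha n hn) _ (ha n), ih hn]
  -- iterates stay in M
  have hiter : ∀ ν ∈ M, ∀ i : ℕ, T^[i] ν ∈ M := by
    intro ν hν i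
    induction i with
    | zero => simpa using hν
    | succ i ih => rw [Function.iterate_succ_apply']; exact hTm ih
  set D : ℝ := Metric.diam M with hD
  have hD0 : 0 ≤ D := Metric.diam_nonneg
  -- key bound: dist (A_n ν) (T (A_n ν)) ≤ D / n
  have hbound : ∀ ν ∈ M, ∀ n : ℕ, n ≠ 0 →
      dist ((n:ℝ)⁻¹ • ∑ i ∈ Finset.range n, T^[i] ν)
        (T ((n:ℝ)⁻¹ • ∑ i ∈ Finset.range n, T^[i] ν)) ≤ D / n := by
    intro ν hν n hn
    obtain ⟨m, rfl⟩ := Nat.exists_eq_succ_of_ne_zero hn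
    set z : ℕ → E := fun i => if i = 0 then T^[m+1] ν else T^[i] ν with hz
    have hTavg : T (((m+1:ℕ):ℝ)⁻¹ • ∑ i ∈ Finset.range (m+1), T^[i] ν)
        = ((m+1:ℕ):ℝ)⁻¹ • ∑ i ∈ Finset.range (m+1), z i := by
      rw [aff_avg _ (hiter ν hν) (m+1) (Nat.succ_ne_zero m)]
      congr 1
      have h1 : ∀ i, T (T^[i] ν) = T^[i+1] ν := fun i =>
        (Function.iterate_succ_apply' T i ν).symm
      calc ∑ i ∈ Finset.range (m+1), T (T^[i] ν)
          = ∑ i ∈ Finset.range (m+1), T^[i+1] ν := by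
            exact Finset.sum_congr rfl (fun i _ => h1 i)
        _ = (∑ i ∈ Finset.range m, T^[i+1] ν) + T^[m+1] ν := Finset.sum_range_succ _ m
        _ = (∑ i ∈ Finset.range m, z (i+1)) + z 0 := by
            simp [hz]
        _ = ∑ i ∈ Finset.range (m+1), z i := (Finset.sum_range_succ' z m).symm
    rw [hTavg]
    have hd := dist_avg (fun i => T^[i] ν) z (m+1) (Nat.succ_ne_zero m)
    refine le_trans hd ?_
    have hsum : ∑ i ∈ Finset.range (m+1), dist (T^[i] ν) (z i) = dist ν (T^[m+1] ν) := by
      rw [Finset.sum_range_succ']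
      simp [hz]
    rw [hsum]
    have hdle : dist ν (T^[m+1] ν) ≤ D :=
      Metric.dist_le_diam_of_mem hMc.isBounded hν (hiter ν hν (m+1))
    rw [div_eq_inv_mul]
    gcongr
  -- limits of almost-fixed sequences in M are fixed
  have lim_fix : ∀ (u : ℕ → E) (y : E) (φ : ℕ → ℕ), (∀ k, u k ∈ M) → y ∈ M →
      StrictMono φ → Tendsto (u ∘ φ) atTop (𝓝 y) →
      Tendsto (fun k => dist (u k) (T (u k))) atTop (𝓝 0) → T y = y := by
    intro u y φ hu hy hφ hconv hd0
    have h1 : Tendsto (u ∘ φ) atTop (𝓝[M] y) :=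
      tendsto_nhdsWithin_iff.2 ⟨hconv, Eventually.of_forall fun k => hu _⟩
    have h2 : Tendsto (fun k => T ((u ∘ φ) k)) atTop (𝓝 (T y)) :=
      (hTc y hy).tendsto.comp h1
    have h3 : Tendsto (fun k => dist ((u ∘ φ) k) (T ((u ∘ φ) k))) atTop
        (𝓝 (dist y (T y))) := hconv.dist h2
    have h4 : Tendsto (fun k => dist ((u ∘ φ) k) (T ((u ∘ φ) k))) atTop (𝓝 0) :=
      hd0.comp hφ.tendsto_atTop
    have h5 : dist y (T y) = 0 := tendsto_nhds_unique h3 h4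
    exact (dist_eq_zero.mp h5).symm
  have htend : Tendsto (fun n : ℕ => D / ((n:ℝ)+1)) atTop (𝓝 0) := by
    have := tendsto_one_div_add_atTop_nhds_zero_nat.const_mul D
    simpa [div_eq_mul_inv, mul_comm, one_div] using this
  -- nonemptiness of F
  obtain ⟨ν₀, hν₀⟩ := hMne
  have hFne : F.Nonempty := by
    set u : ℕ → E := fun n => ((n+1:ℕ):ℝ)⁻¹ • ∑ i ∈ Finset.range (n+1), T^[i] ν₀ with hu
    have huM : ∀ n, u n ∈ M := fun n => avg_mem _ (hiter ν₀ hν₀) (n+1) (Nat.succ_ne_zero n)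
    have hud : ∀ n, dist (u n) (T (u n)) ≤ D / ((n:ℝ)+1) := by
      intro n
      have := hbound ν₀ hν₀ (n+1) (Nat.succ_ne_zero n)
      simpa [hu] using this
    have hud0 : Tendsto (fun n => dist (u n) (T (u n))) atTop (𝓝 0) :=
      squeeze_zero (fun n => dist_nonneg) hud htend
    obtain ⟨y, hy, φ, hφ, hconv⟩ := hMc.tendsto_subseq huM
    exact ⟨y, hy, lim_fix u y φ huM hy hφ hconv hud0⟩
  refine ⟨hFne, ?_⟩
  -- the ε-δ compactness lemma
  have key : ∀ ε > 0, ∃ δ > 0, ∀ x ∈ M, dist x (T x) < δ → Metric.infDist x F < ε := by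
    intro ε hε
    by_contra h
    push_neg at h
    choose! x hxM hxd hxi using fun k : ℕ => h (1/((k:ℝ)+1)) (by positivity)
    have hxd0 : Tendsto (fun k => dist (x k) (T (x k))) atTop (𝓝 0) := by
      refine squeeze_zero (fun k => dist_nonneg) (fun k => le_of_lt (hxd k)) ?_
      simpa using tendsto_one_div_add_atTop_nhds_zero_nat (𝕜 := ℝ)
    obtain ⟨y, hy, φ, hφ, hconv⟩ := hMc.tendsto_subseq hxM
    have hfix : T y = y := lim_fix x y φ hxM hy hφ hconv hxd0
    have hyF : y ∈ F := ⟨hy, hfix⟩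
    have h6 : Tendsto (fun k => Metric.infDist ((x ∘ φ) k) F) atTop
        (𝓝 (Metric.infDist y F)) :=
      ((Metric.continuous_infDist_pt F).tendsto y).comp hconv
    have h7 : ε ≤ Metric.infDist y F :=
      ge_of_tendsto h6 (Eventually.of_forall fun k => hxi (φ k))
    rw [Metric.infDist_zero_of_mem hyF] at h7
    linarith
  intro ε hε
  obtain ⟨δ, hδ, hkey⟩ := key ε hε
  obtain ⟨n₀', hn₀'⟩ := exists_nat_gt (D/δ)
  refine ⟨max n₀' 1, fun ν hν n hn => ?_⟩
  have hn1 : 1 ≤ n := le_trans (le_max_right _ _) hn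
  have hnn : n ≠ 0 := by omega
  have hnn' : n₀' ≤ n := le_trans (le_max_left _ _) hn
  have hmem : ((n:ℝ)⁻¹ • ∑ i ∈ Finset.range n, T^[i] ν) ∈ M :=
    avg_mem _ (hiter ν hν) n hnn
  have hb := hbound ν hν n hnn
  have hlt : D / (n:ℝ) < δ := by
    rw [div_lt_iff₀ (by positivity : (0:ℝ) < (n:ℝ))]
    have h8 : D < n₀' * δ := by
      rw [div_lt_iff₀ hδ] at hn₀'
      exact hn₀'
    calc D < n₀' * δ := h8
      _ ≤ n * δ := by gcongr <;> exact_mod_cast hnn'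
      _ = δ * n := mul_comm _ _
  exact hkey _ hmem (lt_of_le_of_lt hb hlt)
end

section
/- Let M be a compact convex metrizable subset of a locally convex topological vector space and let μ be an extreme point of M. Then for every ε > 0 there exists δ > 0 such that whenever ξ is a Borel probability measure on M with d(bar(ξ), μ) < δ, one has ξ{ ν ∈ M : d(μ,ν) < ε } > 1 − ε. -/
open MeasureTheory Filter Topology Set

lemma exists_barycenter {E : Type*} [AddCommGroup E] [Module ℝ E] [MetricSpace E]
    [IsTopologicalAddGroup E] [ContinuousSMul ℝ E]
    [MeasurableSpace E] [BorelSpace E]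
    (C : Set E) (hC : IsCompact C) (hconv : Convex ℝ C)
    (η : Measure E) [IsProbabilityMeasure η] (hη : η C = 1) :
    ∃ p ∈ C, ∀ L : E →L[ℝ] ℝ, L p = ∫ x, L x ∂η := by
  classical
  have hCm : MeasurableSet C := hC.isClosed.measurableSet
  have haeC : ∀ᵐ x ∂η, x ∈ C := by
    rw [MeasureTheory.ae_iff]
    have : η Cᶜ = 0 := by
      rw [MeasureTheory.prob_compl_eq_zero_iff hCm]; exact hη
    exact this
  set t : Finset (E →L[ℝ] ℝ) → Set E :=
    fun s => {x ∈ C | ∀ L ∈ s, L x = ∫ y, L y ∂η} with ht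
  have htclosed : ∀ s, IsClosed (t s) := by
    intro s
    have : t s = C ∩ ⋂ L ∈ (s : Set (E →L[ℝ] ℝ)), {x | L x = ∫ y, L y ∂η} := by
      ext x; simp [ht]
    rw [this]
    exact hC.isClosed.inter (isClosed_biInter fun L _ => isClosed_eq L.continuous continuous_const)
  have htsub : ∀ s, t s ⊆ C := fun s x hx => hx.1
  have htcomp : ∀ s, IsCompact (t s) := fun s => hC.of_isClosed_subset (htclosed s) (htsub s)
  have htmono : ∀ s s', s ⊆ s' → t s' ⊆ t s := by
    intro s s' hss x hx
    exact ⟨hx.1, fun L hL => hx.2 L (hss hL)⟩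
  have htne : ∀ s, (t s).Nonempty := by
    intro s
    set f : E → (s → ℝ) := fun x i => (i : E →L[ℝ] ℝ) x with hf
    have hfc : Continuous f := continuous_pi fun i => (i : E →L[ℝ] ℝ).continuous
    obtain ⟨R, hR⟩ := hC.exists_bound_of_continuousOn hfc.continuousOn
    have hfi : Integrable f η := by
      refine Integrable.mono' (integrable_const R) hfc.aestronglyMeasurable ?_
      exact haeC.mono fun x hx => hR x hx
    have himg : (∫ x, f x ∂η) ∈ f '' C := by
      have hconvimg : Convex ℝ (f '' C) := by
        have : f = fun x => (LinearMap.pi (fun i : s => ((i : E →L[ℝ] ℝ) : E →ₗ[ℝ] ℝ))) x := by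
          funext x; rfl
        rw [this]
        exact hconv.linear_image _
      exact hconvimg.integral_mem (hC.image hfc).isClosed
        (haeC.mono fun x hx => Set.mem_image_of_mem f hx) hfi
    obtain ⟨x, hxC, hfx⟩ := himg
    refine ⟨x, hxC, fun L hL => ?_⟩
    have h1 := congrFun hfx ⟨L, hL⟩
    have h2 := ContinuousLinearMap.integral_comp_comm (ContinuousLinearMap.proj (R := ℝ)
      (φ := fun _ : s => ℝ) ⟨L, hL⟩) hfi
    calc L x = f x ⟨L, hL⟩ := rfl
      _ = (∫ x, f x ∂η) ⟨L, hL⟩ := h1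
      _ = ∫ y, L y ∂η := h2.symm
  have hdir : Directed (· ⊇ ·) t := by
    intro s s'
    exact ⟨s ∪ s', htmono _ _ Finset.subset_union_left, htmono _ _ Finset.subset_union_right⟩
  obtain ⟨p, hp⟩ := IsCompact.nonempty_iInter_of_directed_nonempty_isCompact_isClosed
    t hdir htne htcomp htclosed
  simp only [Set.mem_iInter] at hp
  refine ⟨p, (hp ∅).1, fun L => ?_⟩
  exact (hp {L}).2 L (Finset.mem_singleton_self L)

set_option maxHeartbeats 1000000 in
theorem stmt4 {E : Type*} [AddCommGroup E] [Module ℝ E] [MetricSpace E]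
    [IsTopologicalAddGroup E] [ContinuousSMul ℝ E] [LocallyConvexSpace ℝ E]
    [MeasurableSpace E] [BorelSpace E]
    (M : Set E) (hMc : IsCompact M) (hMconv : Convex ℝ M)
    (μ : E) (hμ : μ ∈ M.extremePoints ℝ) :
    ∀ ε > 0, ∃ δ > 0, ∀ (ξ : Measure E) (b : E),
      IsProbabilityMeasure ξ → ξ M = 1 → b ∈ M →
      (∀ f : E → ℝ, ContinuousOn f M →
        (∀ t ∈ Set.Icc (0:ℝ) 1, ∀ a ∈ M, ∀ c ∈ M,
          f (t • a + (1 - t) • c) = t * f a + (1 - t) * f c) →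
        f b = ∫ x, f x ∂ξ) →
      dist b μ < δ →
      1 - ε < (ξ {ν | ν ∈ M ∧ dist μ ν < ε}).toReal := by
  classical
  intro ε hε
  -- the far set
  set F : Set E := {ν | ν ∈ M ∧ ε ≤ dist μ ν} with hFdef
  have hFsub : F ⊆ M := fun x hx => hx.1
  have hFclosed : IsClosed F :=
    hMc.isClosed.inter (isClosed_le continuous_const (continuous_const.dist continuous_id))
  have hFcomp : IsCompact F := hMc.of_isClosed_subset hFclosed hFsub
  have hFm : MeasurableSet F := hFclosed.measurableSet
  -- separating functionals
  have hsep : ∀ x ∈ F, ∃ L : E →L[ℝ] ℝ, L μ < L x := by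
    intro x hx
    have hne : μ ≠ x := by
      intro h
      rw [← h] at hx
      have := hx.2
      simp at this
      linarith
    exact geometric_hahn_banach_point_point hne
  choose! L hL using hsep
  set c : E → ℝ := fun x => (L x μ + L x x) / 2 with hc
  have hcμ : ∀ x ∈ F, L x μ < c x := by intro x hx; have := hL x hx; simp [hc]; linarith
  have hcx : ∀ x ∈ F, c x < L x x := by intro x hx; have := hL x hx; simp [hc]; linarith
  set U : E → Set E := fun x => {y | c x < L x y} with hU
  have hUopen : ∀ x, IsOpen (U x) := fun x => isOpen_lt continuous_const (L x).continuous
  have hcover : F ⊆ ⋃ x ∈ F, U x := fun x hx =>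
    Set.mem_biUnion hx (hcx x hx)
  obtain ⟨b', hb'sub, hb'fin, hb'cover⟩ :=
    hFcomp.elim_finite_subcover_image (fun x _ => hUopen x) hcover
  set s : Finset E := hb'fin.toFinset with hs
  have hssub : ∀ i ∈ s, i ∈ F := fun i hi => hb'sub (hb'fin.mem_toFinset.mp hi)
  set k : ℕ := s.card with hk
  -- the bad set
  set S : E → Set E := fun i =>
    (fun tpq : ℝ × E × E => tpq.1 • tpq.2.1 + (1 - tpq.1) • tpq.2.2) ''
      ((Set.Icc (ε / k) 1) ×ˢ ((M ∩ {y | c i ≤ L i y}) ×ˢ M)) with hS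
  have hScomp : ∀ i ∈ s, IsCompact (S i) := by
    intro i _
    apply IsCompact.image
    · exact isCompact_Icc.prod
        ((hMc.inter_right (isClosed_le continuous_const (L i).continuous)).prod hMc)
    · fun_prop
  set Sbad : Set E := ⋃ i ∈ s, S i with hSbad
  have hSbadcomp : IsCompact Sbad := s.finite_toSet.isCompact_biUnion hScomp
  have hμnot : μ ∉ Sbad := by
    intro hmem
    rw [hSbad, Set.mem_iUnion₂] at hmem
    obtain ⟨i, hi, hmem⟩ := hmem
    obtain ⟨⟨t, p, q⟩, ⟨htIcc, ⟨hpM, hpc⟩, hqM⟩, heq⟩ := hmem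
    simp only at heq
    simp only [Set.mem_Icc] at htIcc
    simp only at hpM hpc hqM
    have hiF : i ∈ F := hssub i hi
    have hkpos : (0:ℝ) < k := by
      have : 0 < s.card := Finset.card_pos.mpr ⟨i, hi⟩
      exact_mod_cast this
    have htpos : 0 < t := lt_of_lt_of_le (div_pos hε hkpos) htIcc.1
    have hpμ : p = μ := by
      rcases eq_or_lt_of_le htIcc.2 with h1 | h1
      · rw [← heq, h1]; simp
      · have hseg : μ ∈ openSegment ℝ p q :=
          ⟨t, 1 - t, htpos, by linarith, by ring, heq⟩
        exact hμ.2 hpM hqM hseg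
    rw [hpμ] at hpc
    exact absurd (lt_of_lt_of_le (hcμ i hiF) hpc) (lt_irrefl _)
  obtain ⟨δ, hδpos, hball⟩ := Metric.isOpen_iff.mp hSbadcomp.isClosed.isOpen_compl μ hμnot
  refine ⟨δ, hδpos, ?_⟩
  intro ξ b hprob hξM hbM hbar hdist
  by_contra hcon
  push_neg at hcon
  -- measure of far set is at least ε
  have hMm : MeasurableSet M := hMc.isClosed.measurableSet
  have hMc0 : ξ Mᶜ = 0 := (prob_compl_eq_zero_iff hMm).mpr hξM
  have hAF : {ν | ν ∈ M ∧ dist μ ν < ε} = M \ F := by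
    ext ν
    simp only [hFdef, Set.mem_setOf_eq, Set.mem_diff, not_and, not_le]
    tauto
  have hsplit : ξ (M \ F) + ξ F = 1 := by
    have h1 : ξ (M \ F) + ξ (M ∩ F) = ξ M := measure_diff_add_inter M hFm
    rwa [Set.inter_eq_self_of_subset_right hFsub, hξM] at h1
  have htot : (ξ (M \ F)).toReal + (ξ F).toReal = 1 := by
    rw [← ENNReal.toReal_add (measure_ne_top ξ _) (measure_ne_top ξ _), hsplit]
    simp
  have hFε : ε ≤ (ξ F).toReal := by
    rw [hAF] at hcon
    linarith
  -- find a piece with mass at least ε / k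
  have hsubadd : (ξ F).toReal ≤ ∑ i ∈ s, (ξ (F ∩ U i)).toReal := by
    have h1 : ξ F ≤ ∑ i ∈ s, ξ (F ∩ U i) := by
      calc ξ F ≤ ξ (⋃ i ∈ s, F ∩ U i) := by
            apply measure_mono
            intro x hx
            have := hb'cover hx
            rw [Set.mem_iUnion₂] at this
            obtain ⟨i, hi, hxi⟩ := this
            exact Set.mem_biUnion (hb'fin.mem_toFinset.mpr hi) ⟨hx, hxi⟩
        _ ≤ ∑ i ∈ s, ξ (F ∩ U i) := measure_biUnion_finset_le s _
    rw [← ENNReal.toReal_sum (fun i _ => measure_ne_top ξ _)]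
    exact ENNReal.toReal_mono (ENNReal.sum_ne_top.mpr fun i _ => measure_ne_top ξ _) h1
  have hex : ∃ i ∈ s, ε / k ≤ (ξ (F ∩ U i)).toReal := by
    by_contra hno
    push_neg at hno
    rcases Finset.eq_empty_or_nonempty s with hse | hsne
    · rw [hse] at hsubadd
      simp at hsubadd
      linarith
    · have hkpos : (0:ℝ) < k := by
        have : 0 < s.card := Finset.card_pos.mpr hsne
        exact_mod_cast this
      have : ∑ i ∈ s, (ξ (F ∩ U i)).toReal < ∑ _i ∈ s, ε / k :=
        Finset.sum_lt_sum_of_nonempty hsne hno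
      rw [Finset.sum_const, nsmul_eq_mul] at this
      have hkk : (s.card : ℝ) * (ε / k) = ε := by
        field_simp [hk]
        simp [hk]
      linarith
  obtain ⟨i, hi, hεk⟩ := hex
  have hiF : i ∈ F := hssub i hi
  have hkpos : (0:ℝ) < k := by
    have : 0 < s.card := Finset.card_pos.mpr ⟨i, hi⟩
    exact_mod_cast this
  set D : Set E := F ∩ U i with hD
  have hDm : MeasurableSet D := hFm.inter (hUopen i).measurableSet
  have htD0 : ξ D ≠ 0 := by
    intro h
    rw [hD] at h
    rw [h] at hεk
    simp at hεk
    have := div_pos hε hkpos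
    linarith
  have htDtop : ξ D ≠ ⊤ := measure_ne_top ξ _
  have htD1 : (ξ D).toReal ≤ 1 := by
    have := prob_le_one (μ := ξ) (s := D)
    exact ENNReal.toReal_le_of_le_ofReal one_pos.le (by simpa using this)
  set tD : ℝ := (ξ D).toReal with htD
  have htDpos : 0 < tD := lt_of_lt_of_le (div_pos hε hkpos) hεk
  -- integrability & barycenter identities
  have haeM : ∀ᵐ x ∂ξ, x ∈ M := by
    rw [MeasureTheory.ae_iff]; exact hMc0
  have hint : ∀ L' : E →L[ℝ] ℝ, Integrable (fun x => L' x) ξ := by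
    intro L'
    obtain ⟨R, hR⟩ := hMc.exists_bound_of_continuousOn L'.continuous.continuousOn
    exact Integrable.mono' (integrable_const R) L'.continuous.aestronglyMeasurable
      (haeM.mono fun x hx => hR x hx)
  have hLb : ∀ L' : E →L[ℝ] ℝ, L' b = ∫ x, L' x ∂ξ := by
    intro L'
    refine hbar (fun x => L' x) L'.continuous.continuousOn ?_
    intro t _ a _ d _
    simp [map_add, _root_.map_smul, smul_eq_mul]
  -- barycenter of the piece on D
  set Ci : Set E := M ∩ {y | c i ≤ L i y} with hCi
  have hCicomp : IsCompact Ci := hMc.inter_right (isClosed_le continuous_const (L i).continuous)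
  have hCiconv : Convex ℝ Ci := hMconv.inter (convex_halfSpace_ge
    (IsLinearMap.mk (L i).map_add (L i).map_smul) (c i))
  set η : Measure E := (ξ D)⁻¹ • ξ.restrict D with hη
  have hηprob : IsProbabilityMeasure η := by
    constructor
    rw [hη, Measure.smul_apply, Measure.restrict_apply MeasurableSet.univ, Set.univ_inter,
      smul_eq_mul, ENNReal.inv_mul_cancel htD0 htDtop]
  have hDCi : D ⊆ Ci := by
    intro x hx
    have h2 : c i < L i x := hx.2
    exact ⟨hFsub hx.1, h2.le⟩
  have hηCi : η Ci = 1 := by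
    rw [hη, Measure.smul_apply, Measure.restrict_apply hCicomp.isClosed.measurableSet,
      Set.inter_eq_self_of_subset_right hDCi, smul_eq_mul,
      ENNReal.inv_mul_cancel htD0 htDtop]
  obtain ⟨p, hpCi, hpbar⟩ := exists_barycenter Ci hCicomp hCiconv η hηCi
  have hintD : ∀ L' : E →L[ℝ] ℝ, ∫ x in D, L' x ∂ξ = tD * L' p := by
    intro L'
    have h1 := hpbar L'
    rw [hη, integral_smul_measure, ENNReal.toReal_inv, smul_eq_mul] at h1
    rw [h1, htD]
    field_simp
    rw [mul_div_assoc, div_self htDpos.ne', mul_one]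
  -- barycenter of the rest
  have hrest : ∃ q ∈ M, ∀ L' : E →L[ℝ] ℝ, ∫ x in Dᶜ, L' x ∂ξ = (1 - tD) * L' q := by
    rcases eq_or_ne (ξ Dᶜ) 0 with hDc0 | hDc0
    · refine ⟨μ, hμ.1, fun L' => ?_⟩
      have h1 : ξ.restrict Dᶜ = 0 := Measure.restrict_eq_zero.mpr hDc0
      have h2 : ξ D = 1 := by
        have := measure_add_measure_compl (μ := ξ) hDm
        rw [hDc0, add_zero] at this
        simpa using this
      rw [h1]
      simp [htD, h2]
    · set ζ : Measure E := (ξ Dᶜ)⁻¹ • ξ.restrict Dᶜ with hζ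
      have hDctop : ξ Dᶜ ≠ ⊤ := measure_ne_top ξ _
      haveI hζprob : IsProbabilityMeasure ζ := by
        constructor
        rw [hζ, Measure.smul_apply, Measure.restrict_apply MeasurableSet.univ, Set.univ_inter,
          smul_eq_mul, ENNReal.inv_mul_cancel hDc0 hDctop]
      have hMDc : ξ (M ∩ Dᶜ) = ξ Dᶜ := by
        refine le_antisymm (measure_mono Set.inter_subset_right) ?_
        calc ξ Dᶜ ≤ ξ ((M ∩ Dᶜ) ∪ Mᶜ) := by
              apply measure_mono
              intro x hx
              by_cases hxM : x ∈ M
              · exact Or.inl ⟨hxM, hx⟩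
              · exact Or.inr hxM
          _ ≤ ξ (M ∩ Dᶜ) + ξ Mᶜ := measure_union_le _ _
          _ = ξ (M ∩ Dᶜ) := by rw [hMc0, add_zero]
      have hζM : ζ M = 1 := by
        rw [hζ, Measure.smul_apply, Measure.restrict_apply hMm, smul_eq_mul, hMDc,
          ENNReal.inv_mul_cancel hDc0 hDctop]
      obtain ⟨q, hqM, hqbar⟩ := exists_barycenter M hMc hMconv ζ hζM
      refine ⟨q, hqM, fun L' => ?_⟩
      have h1 := hqbar L'
      rw [hζ, integral_smul_measure, ENNReal.toReal_inv, smul_eq_mul] at h1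
      have hDc1 : (ξ Dᶜ).toReal = 1 - tD := by
        have := measure_add_measure_compl (μ := ξ) hDm
        have h2 : (ξ D).toReal + (ξ Dᶜ).toReal = 1 := by
          rw [← ENNReal.toReal_add (measure_ne_top ξ _) (measure_ne_top ξ _), this]
          simp
        rw [htD]; linarith
      have hDcpos : (ξ Dᶜ).toReal ≠ 0 := by
        simp [ENNReal.toReal_ne_zero, hDc0, hDctop]
      rw [h1, hDc1]
      rw [hDc1] at hDcpos
      field_simp
  obtain ⟨q, hqM, hintDc⟩ := hrest
  -- b is the convex combination
  have hbeq : b = tD • p + (1 - tD) • q := by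
    by_contra hne
    obtain ⟨L', hL'⟩ := SeparatingDual.exists_separating_of_ne (R := ℝ) hne
    apply hL'
    calc L' b = ∫ x, L' x ∂ξ := hLb L'
      _ = ∫ x in D, L' x ∂ξ + ∫ x in Dᶜ, L' x ∂ξ := (integral_add_compl hDm (hint L')).symm
      _ = tD * L' p + (1 - tD) * L' q := by rw [hintD L', hintDc L']
      _ = L' (tD • p + (1 - tD) • q) := by simp [map_add, _root_.map_smul, smul_eq_mul]
  have hbS : b ∈ S i := by
    refine ⟨(tD, p, q), ⟨⟨hεk, htD1⟩, hpCi, hqM⟩, hbeq.symm⟩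
  have hbSbad : b ∈ Sbad := Set.mem_biUnion hi hbS
  have hbball : b ∈ Metric.ball μ δ := by
    rw [Metric.mem_ball]; exact hdist
  exact hball hbball hbSbad
end

section
/- Let (X,T) be a compact metric dynamical system with the weak specification property witnessed by functions {M_ε : ε > 0}. Let (ε_k)_{k≥0} be a summable sequence of positive reals, let D = ⋃_{N≥1}[a_N,b_N] be the domain of an infinite specification S : D → X, and suppose there is an increasing sequence (N_k)_{k≥0} with N_0 = 0 such that for every k ≥ 1 and every N ∈ [N_{k−1}+1, N_k], the gap g_N = a_{N+1} − b_N − 1 satisfies g_N ≥ M_{ε_k}(l_{N+1}) where l_{N+1} = b_{N+1} − a_{N+1} + 1. Then there exists a point x₀ ∈ X such that d(S(n), T^n x₀) → 0 as n → ∞ along n ∈ D. -/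
open MeasureTheory Filter Topology

theorem stmt6 {X : Type*} [MetricSpace X] [CompactSpace X]
    (T : X → X) (hTc : Continuous T)
    (M : ℝ → ℕ → ℕ)
    (hspec : ∀ e : ℝ, 0 < e →
      Tendsto (fun l : ℕ => (M e l : ℝ) / (l : ℝ)) atTop (nhds 0) ∧
      ∀ (N₁ : ℕ) (a b : ℕ → ℕ) (p : ℕ → X),
        (∀ N, 1 ≤ N → N ≤ N₁ → a N ≤ b N) →
        (∀ N, 1 ≤ N → N ≤ N₁ → b N < a (N + 1)) →
        (∀ N, 1 ≤ N → N < N₁ → b N + 1 + M e (b (N + 1) - a (N + 1) + 1) ≤ a (N + 1)) →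
        ∃ x : X, ∀ N, 1 ≤ N → N ≤ N₁ → ∀ n, a N ≤ n → n ≤ b N →
          dist (T^[n] (p N)) (T^[n] x) < e)
    (ε : ℕ → ℝ) (hεpos : ∀ k, 0 < ε k) (hεsum : Summable ε)
    (a b : ℕ → ℕ) (p : ℕ → X)
    (hab : ∀ N, 1 ≤ N → a N ≤ b N) (hgap0 : ∀ N, 1 ≤ N → b N < a (N + 1))
    (Nseq : ℕ → ℕ) (hNmono : StrictMono Nseq) (hN0 : Nseq 0 = 0)
    (hgap : ∀ k, 1 ≤ k → ∀ N, Nseq (k - 1) + 1 ≤ N → N ≤ Nseq k →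
      b N + 1 + M (ε k) (b (N + 1) - a (N + 1) + 1) ≤ a (N + 1)) :
    ∃ x₀ : X, ∀ η > 0, ∃ n₀ : ℕ, ∀ N, 1 ≤ N → ∀ n, a N ≤ n → n ≤ b N → n₀ ≤ n →
      dist (T^[n] (p N)) (T^[n] x₀) < η := by
  -- monotonicity of a and b on [1, ∞)
  have amono : ∀ m n : ℕ, 1 ≤ m → m ≤ n → a m ≤ a n := by
    intro m n hm hmn
    induction n with
    | zero => omega
    | succ n ih =>
      rcases Nat.lt_or_ge m (n+1) with h | h
      · have h1 : m ≤ n := by omega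
        have := ih h1
        have h2 := hab n (by omega)
        have h3 := hgap0 n (by omega)
        omega
      · rw [show m = n + 1 by omega]
  have bmono : ∀ m n : ℕ, 1 ≤ m → m ≤ n → b m ≤ b n := by
    intro m n hm hmn
    rcases Nat.lt_or_ge m n with h | h
    · have h1 := hgap0 m hm
      have h2 := amono (m+1) n (by omega) (by omega)
      have h3 := hab n (by omega)
      omega
    · rw [show m = n by omega]
  -- one gluing step
  have Hstep : ∀ (k : ℕ) (z : X), ∃ x : X, 1 ≤ k →
      (∀ n, a 1 ≤ n → n ≤ b (Nseq (k-1) + 1) → dist (T^[n] z) (T^[n] x) < ε k) ∧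
      (∀ N, Nseq (k-1) + 2 ≤ N → N ≤ Nseq k + 1 → ∀ n, a N ≤ n → n ≤ b N →
        dist (T^[n] (p N)) (T^[n] x) < ε k) := by
    intro k z
    rcases Nat.eq_zero_or_pos k with hk0 | hk1
    · exact ⟨z, by omega⟩
    set K := Nseq (k-1) with hK
    have hKlt : K < Nseq k := hNmono (by omega)
    set m := Nseq k + 1 - K with hm
    have hm2 : 2 ≤ m := by omega
    set a' : ℕ → ℕ := fun i => if i ≤ 1 then a 1 else a (K + i) with ha'
    set b' : ℕ → ℕ := fun i => b (K + i) with hb'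
    set p' : ℕ → X := fun i => if i ≤ 1 then z else p (K + i) with hp'
    obtain ⟨x, hx⟩ := (hspec (ε k) (hεpos k)).2 m a' b' p'
      (by
        intro N h1 h2
        simp only [ha', hb']
        by_cases h : N ≤ 1
        · simp only [h, if_pos]
          exact le_trans (amono 1 (K+N) le_rfl (by omega)) (hab _ (by omega))
        · simp only [h, if_neg, if_false]
          exact hab _ (by omega))
      (by
        intro N h1 h2
        simp only [ha', hb']
        have hne : ¬ (N + 1 ≤ 1) := by omega
        simp only [hne, if_neg, if_false]
        have := hgap0 (K + N) (by omega)
        have : K + N + 1 = K + (N+1) := by omega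
        rw [← this]
        exact hgap0 (K + N) (by omega))
      (by
        intro N h1 h2
        simp only [ha', hb']
        have hne : ¬ (N + 1 ≤ 1) := by omega
        simp only [hne, if_neg, if_false]
        have hgN := hgap k hk1 (K + N) (by omega) (by omega)
        rw [show K + (N + 1) = K + N + 1 by omega]
        exact hgN)
    refine ⟨x, fun _ => ⟨?_, ?_⟩⟩
    · intro n hn1 hn2
      have := hx 1 le_rfl (by omega) n (by simpa [ha'] using hn1)
        (by simpa [hb', hK] using hn2)
      simpa [hp'] using this
    · intro N hN1 hN2 n hn1 hn2
      have hi1 : 1 ≤ N - K := by omega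
      have hi2 : N - K ≤ m := by omega
      have hKN : K + (N - K) = N := by omega
      have hne : ¬ (N - K ≤ 1) := by omega
      have := hx (N - K) hi1 hi2 n
        (by simp only [ha', hne, if_neg, if_false, hKN]; exact hn1)
        (by simp only [hb', hKN]; exact hn2)
      simpa [hp', hne, hKN] using this
  choose F hF using Hstep
  -- the sequence of shadowing points
  set y : ℕ → X := fun k => Nat.rec (p 1) (fun k ih => F (k+1) ih) k with hy
  have hy0 : y 0 = p 1 := rfl
  have hysucc : ∀ k, y (k+1) = F (k+1) (y k) := fun k => rfl
  -- step estimates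
  have hstep1 : ∀ k, 1 ≤ k → ∀ n, a 1 ≤ n → n ≤ b (Nseq (k-1) + 1) →
      dist (T^[n] (y (k-1))) (T^[n] (y k)) < ε k := by
    intro k hk n h1 h2
    obtain ⟨k', rfl⟩ : ∃ k', k = k' + 1 := ⟨k - 1, by omega⟩
    have := (hF (k'+1) (y k') hk).1 n h1 (by simpa using h2)
    simpa [hysucc] using this
  have hstep2 : ∀ k, 1 ≤ k → ∀ N, Nseq (k-1) + 2 ≤ N → N ≤ Nseq k + 1 →
      ∀ n, a N ≤ n → n ≤ b N → dist (T^[n] (p N)) (T^[n] (y k)) < ε k := by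
    intro k hk N hN1 hN2 n h1 h2
    obtain ⟨k', rfl⟩ : ∃ k', k = k' + 1 := ⟨k - 1, by omega⟩
    have := (hF (k'+1) (y k') hk).2 N (by simpa using hN1) hN2 n h1 h2
    simpa [hysucc] using this
  -- cumulative estimate
  have hcum : ∀ j, 1 ≤ j → ∀ N, 1 ≤ N → N ≤ Nseq j + 1 →
      (j = 1 ∨ Nseq (j-1) + 2 ≤ N) → ∀ k, j ≤ k → ∀ n, a N ≤ n → n ≤ b N →
      dist (T^[n] (p N)) (T^[n] (y k)) < ∑ i ∈ Finset.Icc j k, ε i := by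
    intro j hj N hN1 hN2 hNlow k hk
    induction k with
    | zero => omega
    | succ k ih =>
      rcases Nat.lt_or_ge k j with hlt | hge
      · -- base case : k + 1 = j
        have hkj : k + 1 = j := by omega
        subst hkj
        intro n h1 h2
        rw [Finset.Icc_self, Finset.sum_singleton]
        rcases hNlow with hj1 | hlow
        · -- j = 1
          rcases Nat.lt_or_ge N 2 with hN2' | hN2'
          · have hNeq : N = 1 := by omega
            subst hNeq
            have := hstep1 (k+1) (by omega) n (h1) (by
              have : (1:ℕ) ≤ Nseq k + 1 := by omega
              exact le_trans h2 (bmono 1 (Nseq k + 1) le_rfl this))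
            rw [hj1] at *
            simpa [hy0] using this
          · have : Nseq (k+1-1) + 2 = 2 := by
              have : k = 0 := by omega
              simp [this, hN0]
            exact hstep2 (k+1) (by omega) N (by omega) hN2 n h1 h2
        · exact hstep2 (k+1) (by omega) N hlow hN2 n h1 h2
      · -- inductive step
        intro n h1 h2
        have hsum : ∑ i ∈ Finset.Icc j (k+1), ε i
            = ∑ i ∈ Finset.Icc j k, ε i + ε (k+1) :=
          Finset.sum_Icc_succ_top (by omega) ε
        rw [hsum]
        have hIH := ih hge n h1 h2
        have hs1 := hstep1 (k+1) (by omega) n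
          (le_trans (amono 1 N (le_rfl) hN1) h1)
          (by
            have hb1 : b N ≤ b (Nseq k + 1) := by
              have : N ≤ Nseq k + 1 := le_trans hN2 (by
                have := hNmono.monotone (show j ≤ k from hge)
                omega)
              exact bmono N (Nseq k + 1) hN1 this
            have : (k+1) - 1 = k := by omega
            rw [this]
            omega)
        calc dist (T^[n] (p N)) (T^[n] (y (k+1)))
            ≤ dist (T^[n] (p N)) (T^[n] (y k)) + dist (T^[n] (y k)) (T^[n] (y (k+1))) :=
              dist_triangle _ _ _
          _ < ∑ i ∈ Finset.Icc j k, ε i + ε (k+1) := by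
              have := hstep1 (k+1) (by omega)
              simpa using add_lt_add hIH (by simpa using hs1)
  -- limit point
  obtain ⟨x₀, -, φ, hφ, hlim⟩ := IsCompact.tendsto_subseq (x := y) isCompact_univ
    (fun n => Set.mem_univ _)
  refine ⟨x₀, ?_⟩
  intro η hη
  -- choose j₀ with tail sum < η
  have htail : Tendsto (fun j => ∑' i : ℕ, ε (i + j)) atTop (𝓝 0) := tendsto_sum_nat_add ε
  have : ∀ᶠ j in atTop, ∑' i : ℕ, ε (i + j) < η := by
    have := htail.eventually (eventually_lt_nhds hη)  -- might not exist; fallback below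
    exact this
  obtain ⟨j₀, hj₀⟩ := ((this.and (eventually_ge_atTop 1)).exists)
  obtain ⟨hj₀η, hj₀1⟩ := hj₀
  set C := ∑' i : ℕ, ε (i + j₀) with hC
  refine ⟨a (Nseq (j₀ - 1) + 2), ?_⟩
  intro N hN1 n h1 h2 h3
  -- N is large
  have hNbig : Nseq (j₀ - 1) + 2 ≤ N := by
    by_contra hcon
    push_neg at hcon
    have hb1 : b N ≤ b (Nseq (j₀-1) + 1) := bmono N _ hN1 (by omega)
    have h4 := hgap0 (Nseq (j₀-1) + 1) (by omega)
    rw [show Nseq (j₀-1) + 1 + 1 = Nseq (j₀-1) + 2 by omega] at h4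
    omega
  -- find the step j containing N
  have hex : ∃ t, N ≤ Nseq (t+1) + 1 := by
    refine ⟨N - 1, ?_⟩
    have : N - 1 + 1 ≤ Nseq (N - 1 + 1) := hNmono.le_apply
    omega
  set t₀ := Nat.find hex with ht₀
  have hNle : N ≤ Nseq (t₀ + 1) + 1 := Nat.find_spec hex
  set j := t₀ + 1 with hjdef
  have hj1 : 1 ≤ j := by omega
  have hjlow : j = 1 ∨ Nseq (j - 1) + 2 ≤ N := by
    rcases Nat.eq_zero_or_pos t₀ with h0 | hpos
    · left; omega
    · right
      have := Nat.find_min hex (m := t₀ - 1) (by omega)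
      push_neg at this
      have heq : t₀ - 1 + 1 = t₀ := by omega
      rw [heq] at this
      have : Nseq t₀ + 1 < N := this
      have hje : j - 1 = t₀ := by omega
      rw [hje]
      omega
  have hjge : j₀ ≤ j := by
    by_contra hcon
    push_neg at hcon
    have : Nseq j ≤ Nseq (j₀ - 1) := hNmono.monotone (by omega)
    omega
  -- pass to the limit along the subsequence
  have hkey : ∀ k, j ≤ k → dist (T^[n] (p N)) (T^[n] (y k)) ≤ C := by
    intro k hk
    have h := hcum j hj1 N hN1 hNle hjlow k hk n h1 h2
    have hsub : ∑ i ∈ Finset.Icc j k, ε i ≤ ∑ i ∈ Finset.Icc j₀ k, ε i :=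
      Finset.sum_le_sum_of_subset_of_nonneg
        (Finset.Icc_subset_Icc hjge le_rfl) (fun i _ _ => (hεpos i).le)
    have hts : ∑ i ∈ Finset.Icc j₀ k, ε i ≤ C := by
      have hsummable : Summable (fun i : ℕ => ε (i + j₀)) :=
        (summable_nat_add_iff j₀).2 hεsum
      have heqs : ∑ i ∈ Finset.Icc j₀ k, ε i
          = ∑ i ∈ Finset.range (k + 1 - j₀), ε (i + j₀) := by
        rw [← Finset.Ico_add_one_right_eq_Icc, Finset.sum_Ico_eq_sum_range]
        exact Finset.sum_congr rfl (fun i _ => by rw [Nat.add_comm])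
      rw [heqs]
      exact Summable.sum_le_tsum _ (fun i _ => (hεpos _).le) hsummable
    linarith
  have htend : Tendsto (fun i => dist (T^[n] (p N)) (T^[n] (y (φ i)))) atTop
      (𝓝 (dist (T^[n] (p N)) (T^[n] x₀))) := by
    have h1' : Tendsto (fun i => T^[n] (y (φ i))) atTop (𝓝 (T^[n] x₀)) :=
      ((hTc.iterate n).tendsto x₀).comp hlim
    exact tendsto_const_nhds.dist h1'
  have hle : dist (T^[n] (p N)) (T^[n] x₀) ≤ C := by
    refine le_of_tendsto htend ?_
    filter_upwards [eventually_ge_atTop j] with i hi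
    exact hkey (φ i) (le_trans hi hφ.le_apply)
  linarith
end

section
/- Let (X,T) be a compact metric system, S : D → X an infinite specification whose domain D ⊆ ℕ has density one, and x₀ ∈ X a point with lim_{n∈D} d(S(n), T^n x₀) = 0. Then x₀ quasi-generates exactly the same invariant measures as S: for any increasing sequence (n_k), the empirical measures of x₀ along [0,n_k] converge to an invariant measure μ if and only if the empirical measures of S restricted to D ∩ [0,n_k] converge to μ. -/
open MeasureTheory Filter Topology

theorem stmt7 {X : Type*} [MetricSpace X] [CompactSpace X] [MeasurableSpace X] [BorelSpace X]
    (T : X → X) (hTc : Continuous T)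
    (D : ℕ → Prop) [DecidablePred D]
    (a b : ℕ → ℕ) (p : ℕ → X) (S : ℕ → X)
    (hab : ∀ N, 1 ≤ N → a N ≤ b N) (hgap : ∀ N, 1 ≤ N → b N < a (N + 1))
    (hD : ∀ n, D n ↔ ∃ N, 1 ≤ N ∧ a N ≤ n ∧ n ≤ b N)
    (hS : ∀ N, 1 ≤ N → ∀ n, a N ≤ n → n ≤ b N → S n = T^[n] (p N))
    (hdens : Tendsto (fun n : ℕ =>
        (((Finset.range (n + 1)).filter D).card : ℝ) / ((n : ℝ) + 1)) atTop (nhds 1))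
    (x₀ : X)
    (hshadow : ∀ η > 0, ∃ n₀, ∀ n, n₀ ≤ n → D n → dist (S n) (T^[n] x₀) < η)
    (nk : ℕ → ℕ) (hnk : StrictMono nk)
    (μ : Measure X) (hprob : IsProbabilityMeasure μ) (hinv : μ.map T = μ) :
    (∀ f : C(X, ℝ), Tendsto (fun k =>
        (∑ i ∈ Finset.range (nk k + 1), f (T^[i] x₀)) / ((nk k : ℝ) + 1))
        atTop (nhds (∫ x, f x ∂μ)))
    ↔
    (∀ f : C(X, ℝ), Tendsto (fun k =>
        (∑ n ∈ (Finset.range (nk k + 1)).filter D, f (S n)) /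
          (((Finset.range (nk k + 1)).filter D).card : ℝ))
        atTop (nhds (∫ x, f x ∂μ))) := by
  have key : ∀ f : C(X, ℝ), Tendsto (fun n : ℕ =>
      (∑ i ∈ Finset.range (n + 1), f (T^[i] x₀)) / ((n : ℝ) + 1)
      - (∑ m ∈ (Finset.range (n + 1)).filter D, f (S m)) /
          (((Finset.range (n + 1)).filter D).card : ℝ)) atTop (nhds 0) := by
    intro f
    set M : ℝ := ‖f‖ with hMdef
    have hM0 : 0 ≤ M := norm_nonneg f
    have hM : ∀ x, |f x| ≤ M := fun x => f.norm_coe_le_norm x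
    have hpos : ∀ n : ℕ, (0:ℝ) < (n:ℝ) + 1 := fun n => by positivity
    set F : ℕ → Finset ℕ := fun n => (Finset.range (n + 1)).filter D with hF
    set c : ℕ → ℝ := fun n => ((F n).card : ℝ) with hc
    have hFsub : ∀ n, F n ⊆ Finset.range (n+1) := fun n => Finset.filter_subset _ _
    have hcle : ∀ n, c n ≤ (n:ℝ) + 1 := by
      intro n
      have h := Finset.card_le_card (hFsub n)
      rw [Finset.card_range] at h
      show ((F n).card : ℝ) ≤ (n:ℝ) + 1
      have : ((F n).card : ℝ) ≤ ((n+1 : ℕ) : ℝ) := by exact_mod_cast h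
      push_cast at this
      linarith
    -- step 1
    have h1 : Tendsto (fun n : ℕ =>
        ((∑ i ∈ Finset.range (n + 1), f (T^[i] x₀)) - ∑ i ∈ F n, f (T^[i] x₀)) / ((n:ℝ)+1))
        atTop (nhds 0) := by
      have hb : ∀ n : ℕ, ‖((∑ i ∈ Finset.range (n + 1), f (T^[i] x₀)) - ∑ i ∈ F n, f (T^[i] x₀)) / ((n:ℝ)+1)‖
          ≤ M * (1 - c n / ((n:ℝ)+1)) := by
        intro n
        have hsd : (∑ i ∈ Finset.range (n + 1), f (T^[i] x₀)) - ∑ i ∈ F n, f (T^[i] x₀)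
            = ∑ i ∈ Finset.range (n+1) \ F n, f (T^[i] x₀) := by
          exact sub_eq_iff_eq_add.2 (Finset.sum_sdiff (hFsub n)).symm
        rw [hsd]
        have habs : |∑ i ∈ Finset.range (n+1) \ F n, f (T^[i] x₀)|
            ≤ M * ((Finset.range (n+1) \ F n).card : ℝ) := by
          calc |∑ i ∈ Finset.range (n+1) \ F n, f (T^[i] x₀)|
              ≤ ∑ i ∈ Finset.range (n+1) \ F n, |f (T^[i] x₀)| := Finset.abs_sum_le_sum_abs _ _
            _ ≤ ∑ _i ∈ Finset.range (n+1) \ F n, M := Finset.sum_le_sum (fun i _ => hM _)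
            _ = M * ((Finset.range (n+1) \ F n).card : ℝ) := by
                rw [Finset.sum_const, nsmul_eq_mul, mul_comm]
        have hcard : ((Finset.range (n+1) \ F n).card : ℝ) = ((n:ℝ)+1) - c n := by
          show _ = ((n:ℝ)+1) - ((F n).card : ℝ)
          rw [Finset.card_sdiff_of_subset (hFsub n), Finset.card_range]
          have h := Finset.card_le_card (hFsub n)
          rw [Finset.card_range] at h
          push_cast [h]
          ring
        rw [norm_div, Real.norm_eq_abs, Real.norm_eq_abs, abs_of_pos (hpos n),
          div_le_iff₀ (hpos n)]
        calc |∑ i ∈ Finset.range (n+1) \ F n, f (T^[i] x₀)|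
            ≤ M * (((n:ℝ)+1) - c n) := by rw [← hcard]; exact habs
          _ = M * (1 - c n / ((n:ℝ)+1)) * ((n:ℝ)+1) := by
              have hne := ne_of_gt (hpos n)
              field_simp
              try ring
      refine squeeze_zero_norm hb ?_
      have : Tendsto (fun n : ℕ => M * (1 - c n / ((n:ℝ)+1))) atTop (nhds (M * (1 - 1))) :=
        (tendsto_const_nhds.sub hdens).const_mul M
      simpa using this
    -- step 2
    have h2 : Tendsto (fun n : ℕ =>
        ((∑ i ∈ F n, f (T^[i] x₀)) - ∑ i ∈ F n, f (S i)) / ((n:ℝ)+1)) atTop (nhds 0) := by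
      rw [NormedAddCommGroup.tendsto_nhds_zero]
      intro ε hε
      obtain ⟨δ, hδ0, hδ⟩ := Metric.uniformContinuous_iff.1
        (CompactSpace.uniformContinuous_of_continuous f.continuous) (ε/4) (by positivity)
      obtain ⟨n₀, hn₀⟩ := hshadow δ hδ0
      have hcore : ∀ n : ℕ, |(∑ i ∈ F n, f (T^[i] x₀)) - ∑ i ∈ F n, f (S i)|
          ≤ 2*M*(n₀:ℝ) + ((n:ℝ)+1) * (ε/4) := by
        intro n
        have hptw : ∀ i ∈ F n, |f (T^[i] x₀) - f (S i)|
            ≤ (if i < n₀ then 2*M else 0) + ε/4 := by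
          intro i hi
          by_cases hlt : i < n₀
          · simp only [hlt, if_true]
            calc |f (T^[i] x₀) - f (S i)| ≤ |f (T^[i] x₀)| + |f (S i)| := abs_sub _ _
              _ ≤ M + M := add_le_add (hM _) (hM _)
              _ ≤ 2*M + ε/4 := by linarith
          · simp only [hlt, if_false, zero_add]
            have hDi : D i := (Finset.mem_filter.1 hi).2
            have := hn₀ i (le_of_not_gt hlt) hDi
            have := hδ this
            rw [Real.dist_eq] at this
            have : |f (S i) - f (T^[i] x₀)| < ε/4 := by simpa [Real.dist_eq] using this
            rw [abs_sub_comm]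
            linarith
        calc |(∑ i ∈ F n, f (T^[i] x₀)) - ∑ i ∈ F n, f (S i)|
            = |∑ i ∈ F n, (f (T^[i] x₀) - f (S i))| := by rw [Finset.sum_sub_distrib]
          _ ≤ ∑ i ∈ F n, |f (T^[i] x₀) - f (S i)| := Finset.abs_sum_le_sum_abs _ _
          _ ≤ ∑ i ∈ F n, ((if i < n₀ then 2*M else 0) + ε/4) := Finset.sum_le_sum hptw
          _ ≤ ∑ i ∈ Finset.range (n+1), ((if i < n₀ then 2*M else 0) + ε/4) := by
              refine Finset.sum_le_sum_of_subset_of_nonneg (hFsub n) ?_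
              intro i _ _
              by_cases hlt : i < n₀ <;> simp [hlt] <;> positivity
          _ = (∑ i ∈ Finset.range (n+1), (if i < n₀ then 2*M else 0))
              + ((n:ℝ)+1) * (ε/4) := by
              rw [Finset.sum_add_distrib, Finset.sum_const, Finset.card_range,
                nsmul_eq_mul]
              push_cast
              ring
          _ ≤ 2*M*(n₀:ℝ) + ((n:ℝ)+1) * (ε/4) := by
              gcongr
              calc (∑ i ∈ Finset.range (n+1), (if i < n₀ then 2*M else 0))
                  = ∑ i ∈ (Finset.range (n+1)).filter (· < n₀), 2*M := by
                    rw [Finset.sum_filter]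
                _ ≤ ∑ _i ∈ Finset.range n₀, 2*M := by
                    refine Finset.sum_le_sum_of_subset_of_nonneg ?_ (fun _ _ _ => by positivity)
                    intro i hi
                    simp only [Finset.mem_filter, Finset.mem_range] at hi ⊢
                    exact hi.2
                _ = 2*M*(n₀:ℝ) := by
                    rw [Finset.sum_const, Finset.card_range, nsmul_eq_mul]
                    ring
      -- choose N with 2M n₀/(n+1) small
      obtain ⟨N, hN⟩ : ∃ N : ℕ, (4 * (2*M*(n₀:ℝ))) / ε ≤ (N:ℝ) :=
        exists_nat_ge _
      filter_upwards [eventually_ge_atTop N] with n hn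
      have hnn : (N:ℝ) ≤ (n:ℝ) := by exact_mod_cast hn
      rw [norm_div, Real.norm_eq_abs, Real.norm_eq_abs, abs_of_pos (hpos n),
        div_lt_iff₀ (hpos n)]
      have h2Mn : 2*M*(n₀:ℝ) ≤ ((n:ℝ)+1) * (ε/4) := by
        rw [div_le_iff₀ hε] at hN
        nlinarith [hpos n]
      calc |(∑ i ∈ F n, f (T^[i] x₀)) - ∑ i ∈ F n, f (S i)|
          ≤ 2*M*(n₀:ℝ) + ((n:ℝ)+1) * (ε/4) := hcore n
        _ ≤ ((n:ℝ)+1) * (ε/4) + ((n:ℝ)+1) * (ε/4) := by linarith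
        _ < ε * ((n:ℝ)+1) := by nlinarith [hpos n]
    -- step 3
    have h3 : Tendsto (fun n : ℕ =>
        (∑ i ∈ F n, f (S i)) / ((n:ℝ)+1) - (∑ i ∈ F n, f (S i)) / c n) atTop (nhds 0) := by
      have hb : ∀ n : ℕ, ‖(∑ i ∈ F n, f (S i)) / ((n:ℝ)+1) - (∑ i ∈ F n, f (S i)) / c n‖
          ≤ M * |c n / ((n:ℝ)+1) - 1| := by
        intro n
        by_cases hc0 : c n = 0
        · have hFe : F n = ∅ := by
            have h0 : ((F n).card : ℝ) = 0 := hc0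
            have : (F n).card = 0 := by exact_mod_cast h0
            exact Finset.card_eq_zero.1 this
          simp [hFe, hc0]
          positivity
        · have hcpos : 0 < c n := lt_of_le_of_ne (by positivity) (Ne.symm hc0)
          have hSle : |∑ i ∈ F n, f (S i)| ≤ M * c n := by
            calc |∑ i ∈ F n, f (S i)| ≤ ∑ i ∈ F n, |f (S i)| := Finset.abs_sum_le_sum_abs _ _
              _ ≤ ∑ _i ∈ F n, M := Finset.sum_le_sum (fun i _ => hM _)
              _ = M * c n := by rw [Finset.sum_const, nsmul_eq_mul, mul_comm]
          have heq : (∑ i ∈ F n, f (S i)) / ((n:ℝ)+1) - (∑ i ∈ F n, f (S i)) / c n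
              = ((∑ i ∈ F n, f (S i)) / c n) * (c n / ((n:ℝ)+1) - 1) := by
            field_simp
          rw [heq, Real.norm_eq_abs, abs_mul, abs_div]
          gcongr
          rw [div_le_iff₀ (abs_pos.2 (ne_of_gt hcpos))]
          calc |∑ i ∈ F n, f (S i)| ≤ M * c n := hSle
            _ = M * |c n| := by rw [abs_of_pos hcpos]
      refine squeeze_zero_norm hb ?_
      have : Tendsto (fun n : ℕ => M * |c n / ((n:ℝ)+1) - 1|) atTop (nhds (M * |1 - 1|)) := by
        exact (((hdens.sub tendsto_const_nhds).abs)).const_mul M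
      simpa using this
    have htot := (h1.add h2).add h3
    rw [show (0:ℝ) + 0 + 0 = 0 by ring] at htot
    refine htot.congr (fun n => ?_)
    have hne : ((n:ℝ)+1) ≠ 0 := ne_of_gt (hpos n)
    field_simp
    try ring
  constructor
  · intro h f
    have h1 := (h f).sub ((key f).comp hnk.tendsto_atTop)
    rw [sub_zero] at h1
    refine h1.congr (fun k => ?_)
    simp [Function.comp]
    try ring
  · intro h f
    have h1 := (h f).add ((key f).comp hnk.tendsto_atTop)
    rw [add_zero] at h1
    refine h1.congr (fun k => ?_)
    simp [Function.comp]
    try ring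
end

section
/- Let (X,T) be a compact metric dynamical system and μ a T-invariant Borel probability measure. For each ε > 0 there exists δ > 0 with the following property. Let 𝒫 be a finite Borel partition of X all of whose atoms have diameter at most δ, let l, N₁ ∈ ℕ, let points x_1,…,x_{N₁} ∈ X and positions 0 ≤ a_1 < a_2 < … < a_{N₁} with a_{N+1} − a_N ≥ l for all N, and define the specification S by S[a_N, a_N + l − 1] = x_N[0, l−1]. Suppose that for every atom B of 𝒫^l = ⋁_{n=0}^{l−1} T^{−n}𝒫, the frequency |{N ∈ [1,N₁] : x_N ∈ B}| / N₁ is within δ/|𝒫^l| of μ(B). Then the empirical measure μ_S = (1/(N₁ l)) ∑_{n∈D} δ_{S(n)}, where D = ⋃_{N=1}^{N₁} [a_N, a_N + l − 1], satisfies d(μ_S, μ) < ε in the weak* metric. -/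
open MeasureTheory Filter Topology
open scoped Classical

private theorem auxSum {X : Type*} [MeasurableSpace X] (μ : Measure X) [IsProbabilityMeasure μ]
    {W : Type*} [Fintype W] (C : W → Set X) (hCmeas : ∀ w, MeasurableSet (C w))
    (hdisj : Pairwise (Function.onFun Disjoint C)) (hcover : (⋃ w, C w) = Set.univ)
    (g : X → ℝ) (hgint : Integrable g μ)
    (N₁ : ℕ) (hN₁ : 0 < (N₁ : ℝ)) (x : ℕ → X) (wmap : ℕ → W) (hwmap : ∀ N, x N ∈ C (wmap N))
    (η θ Mg : ℝ) (hθ : 0 ≤ θ)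
    (hosc : ∀ w, ∀ y ∈ C w, ∀ z ∈ C w, |g y - g z| ≤ η)
    (hgbd : ∀ y, |g y| ≤ Mg) (freq : W → ℝ)
    (hfreqcard : ∀ w, ((((Finset.Icc 1 N₁).filter (fun N => wmap N = w)).card : ℝ)) = freq w)
    (hfreq : ∀ w, (C w).Nonempty → |freq w / (N₁ : ℝ) - (μ (C w)).toReal| ≤ θ) :
    |(∑ N ∈ Finset.Icc 1 N₁, g (x N)) - (N₁ : ℝ) * ∫ y, g y ∂μ|
      ≤ (N₁ : ℝ) * η + (N₁ : ℝ) * η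
        + ((Finset.univ.filter (fun w : W => (C w).Nonempty)).card : ℝ)
          * ((N₁ : ℝ) * (θ * Mg)) := by
  classical
  set S := Finset.Icc 1 N₁ with hS
  have hA : ∑ N ∈ S, g (x N) = ∑ w : W, ∑ N ∈ S.filter (fun N => wmap N = w), g (x N) :=
    (Finset.sum_fiberwise S wmap (fun N => g (x N))).symm
  have hI : ∫ y, g y ∂μ = ∑ w : W, ∫ y in C w, g y ∂μ := by
    rw [← setIntegral_univ, ← hcover,
      integral_iUnion_fintype hCmeas hdisj (fun w => hgint.integrableOn)]
  have hμsum : ∑ w : W, (μ (C w)).toReal = 1 := by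
    have h1 : ∫ y in ⋃ w, C w, (1 : ℝ) ∂μ = ∑ w, ∫ y in C w, (1 : ℝ) ∂μ :=
      integral_iUnion_fintype hCmeas hdisj (fun w => (integrable_const 1).integrableOn)
    rw [hcover, setIntegral_univ] at h1
    simpa [measure_univ, Measure.real] using h1.symm
  have hcnt : ∑ w : W, ((S.filter (fun N => wmap N = w)).card : ℝ) = (N₁ : ℝ) := by
    have h2 := Finset.sum_fiberwise S wmap (fun _ => (1 : ℕ))
    have h3 : ∑ w : W, (S.filter (fun N => wmap N = w)).card = N₁ := by
      simpa [hS, Nat.card_Icc] using h2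
    exact_mod_cast congrArg (Nat.cast : ℕ → ℝ) h3
  have hkey : ∀ w : W,
      |(∑ N ∈ S.filter (fun N => wmap N = w), g (x N)) - (N₁ : ℝ) * ∫ y in C w, g y ∂μ|
        ≤ ((S.filter (fun N => wmap N = w)).card : ℝ) * η
          + (N₁ : ℝ) * ((μ (C w)).toReal * η)
          + (if (C w).Nonempty then (N₁ : ℝ) * (θ * Mg) else 0) := by
    intro w
    by_cases hw : (C w).Nonempty
    · obtain ⟨z, hz⟩ := hw
      rw [if_pos ⟨z, hz⟩]
      set cnt : ℝ := ((S.filter (fun N => wmap N = w)).card : ℝ) with hcntdef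
      have hmem : ∀ N ∈ S.filter (fun N => wmap N = w), x N ∈ C w := by
        intro N hN
        have h := (Finset.mem_filter.mp hN).2
        rw [← h]; exact hwmap N
      have t1 : |(∑ N ∈ S.filter (fun N => wmap N = w), g (x N)) - cnt * g z| ≤ cnt * η := by
        have hc : cnt * g z = ∑ _N ∈ S.filter (fun N => wmap N = w), g z := by
          rw [Finset.sum_const, nsmul_eq_mul]
        rw [hc, ← Finset.sum_sub_distrib]
        calc |∑ N ∈ S.filter (fun N => wmap N = w), (g (x N) - g z)|
            ≤ ∑ N ∈ S.filter (fun N => wmap N = w), |g (x N) - g z| :=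
              Finset.abs_sum_le_sum_abs _ _
          _ ≤ ∑ _N ∈ S.filter (fun N => wmap N = w), η :=
              Finset.sum_le_sum fun N hN => hosc w _ (hmem N hN) z hz
          _ = cnt * η := by rw [Finset.sum_const, nsmul_eq_mul]
      have t2 : |cnt * g z - (N₁ : ℝ) * ((μ (C w)).toReal * g z)| ≤ (N₁ : ℝ) * (θ * Mg) := by
        have he : cnt * g z - (N₁ : ℝ) * ((μ (C w)).toReal * g z)
            = (N₁ : ℝ) * ((cnt / (N₁ : ℝ) - (μ (C w)).toReal) * g z) := by
          field_simp
        rw [he, abs_mul, abs_mul, abs_of_pos hN₁]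
        have h1 : |cnt / (N₁ : ℝ) - (μ (C w)).toReal| ≤ θ := by
          rw [hcntdef, hfreqcard w]
          exact hfreq w ⟨z, hz⟩
        have h2 : |g z| ≤ Mg := hgbd z
        have h3 : |cnt / (N₁ : ℝ) - (μ (C w)).toReal| * |g z| ≤ θ * Mg :=
          mul_le_mul h1 h2 (abs_nonneg _) hθ
        exact mul_le_mul_of_nonneg_left h3 hN₁.le
      have t3 : |(N₁ : ℝ) * ((μ (C w)).toReal * g z) - (N₁ : ℝ) * ∫ y in C w, g y ∂μ|
          ≤ (N₁ : ℝ) * ((μ (C w)).toReal * η) := by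
        rw [← mul_sub, abs_mul, abs_of_pos hN₁]
        have hconst : (μ (C w)).toReal * g z = ∫ _y in C w, g z ∂μ := by
          rw [setIntegral_const, smul_eq_mul]; rfl
        have hint : |∫ y in C w, (g z - g y) ∂μ| ≤ η * (μ (C w)).toReal := by
          have := norm_setIntegral_le_of_norm_le_const (μ := μ) (s := C w)
            (f := fun y => g z - g y) (C := η)
            (measure_lt_top μ _)
            (fun y hy => by
              rw [Real.norm_eq_abs, abs_sub_comm]
              exact hosc w y hy z hz)
          simpa [Real.norm_eq_abs, Measure.real] using this
        have hsub : (μ (C w)).toReal * g z - ∫ y in C w, g y ∂μ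
            = ∫ y in C w, (g z - g y) ∂μ := by
          rw [hconst, ← integral_sub (integrable_const _).integrableOn hgint.integrableOn]
        rw [hsub]
        exact mul_le_mul_of_nonneg_left (hint.trans_eq (mul_comm _ _)) hN₁.le
      calc |(∑ N ∈ S.filter (fun N => wmap N = w), g (x N)) - (N₁ : ℝ) * ∫ y in C w, g y ∂μ|
          ≤ |(∑ N ∈ S.filter (fun N => wmap N = w), g (x N)) - cnt * g z|
            + |cnt * g z - (N₁ : ℝ) * ((μ (C w)).toReal * g z)|
            + |(N₁ : ℝ) * ((μ (C w)).toReal * g z) - (N₁ : ℝ) * ∫ y in C w, g y ∂μ| := by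
            have := abs_sub_le (∑ N ∈ S.filter (fun N => wmap N = w), g (x N))
              (cnt * g z) ((N₁ : ℝ) * ∫ y in C w, g y ∂μ)
            have h2 := abs_sub_le (cnt * g z) ((N₁ : ℝ) * ((μ (C w)).toReal * g z))
              ((N₁ : ℝ) * ∫ y in C w, g y ∂μ)
            linarith
        _ ≤ cnt * η + (N₁ : ℝ) * (θ * Mg) + (N₁ : ℝ) * ((μ (C w)).toReal * η) := by
            linarith
        _ = cnt * η + (N₁ : ℝ) * ((μ (C w)).toReal * η) + (N₁ : ℝ) * (θ * Mg) := by ring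
    · rw [if_neg hw]
      have hCempty : C w = ∅ := Set.not_nonempty_iff_eq_empty.mp hw
      have hfilt : S.filter (fun N => wmap N = w) = ∅ := by
        rw [Finset.filter_eq_empty_iff]
        intro N _ hNw
        have hx := hwmap N
        rw [hNw, hCempty] at hx
        exact Set.notMem_empty _ hx
      rw [hfilt, hCempty]
      simp
  calc |(∑ N ∈ S, g (x N)) - (N₁ : ℝ) * ∫ y, g y ∂μ|
      = |∑ w : W, ((∑ N ∈ S.filter (fun N => wmap N = w), g (x N))
          - (N₁ : ℝ) * ∫ y in C w, g y ∂μ)| := by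
        rw [Finset.sum_sub_distrib, ← Finset.mul_sum, ← hI, ← hA]
    _ ≤ ∑ w : W, |(∑ N ∈ S.filter (fun N => wmap N = w), g (x N))
          - (N₁ : ℝ) * ∫ y in C w, g y ∂μ| := Finset.abs_sum_le_sum_abs _ _
    _ ≤ ∑ w : W, (((S.filter (fun N => wmap N = w)).card : ℝ) * η
          + (N₁ : ℝ) * ((μ (C w)).toReal * η)
          + (if (C w).Nonempty then (N₁ : ℝ) * (θ * Mg) else 0)) :=
        Finset.sum_le_sum fun w _ => hkey w
    _ = (N₁ : ℝ) * η + (N₁ : ℝ) * η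
        + ((Finset.univ.filter (fun w : W => (C w).Nonempty)).card : ℝ)
          * ((N₁ : ℝ) * (θ * Mg)) := by
        rw [Finset.sum_add_distrib, Finset.sum_add_distrib]
        congr 1
        · congr 1
          · rw [← Finset.sum_mul, hcnt]
          · rw [← Finset.mul_sum, ← Finset.sum_mul, hμsum, one_mul]
        · rw [← Finset.sum_filter, Finset.sum_const, nsmul_eq_mul]

theorem stmt9 {X : Type*} [MetricSpace X] [CompactSpace X] [MeasurableSpace X] [BorelSpace X]
    (T : X → X) (hTc : Continuous T)
    (μ : Measure X) [IsProbabilityMeasure μ] (hinv : μ.map T = μ)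
    (f : C(X, ℝ)) (ε : ℝ) (hε : 0 < ε) :
    ∃ δ > 0, ∀ (ι : Type) [Fintype ι] (φ : X → ι),
      (∀ i : ι, MeasurableSet (φ ⁻¹' {i})) →
      (∀ i : ι, Metric.diam (φ ⁻¹' {i}) ≤ δ) →
      ∀ (l N₁ : ℕ), 1 ≤ l → 1 ≤ N₁ →
      ∀ (x : ℕ → X) (a : ℕ → ℕ),
      (∀ N, 1 ≤ N → N < N₁ → a N + l ≤ a (N + 1)) →
      (∀ w : Fin l → ι,
        (Set.Nonempty {y : X | ∀ m : Fin l, φ (T^[(m : ℕ)] y) = w m}) →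
        |(((Finset.Icc 1 N₁).filter
              (fun N => ∀ m : Fin l, φ (T^[(m : ℕ)] (x N)) = w m)).card : ℝ) / (N₁ : ℝ)
          - (μ {y : X | ∀ m : Fin l, φ (T^[(m : ℕ)] y) = w m}).toReal|
          < δ / (((Finset.univ : Finset (Fin l → ι)).filter
              (fun w' => Set.Nonempty {y : X | ∀ m : Fin l, φ (T^[(m : ℕ)] y) = w' m})).card : ℝ)) →
      |(∑ N ∈ Finset.Icc 1 N₁, ∑ n ∈ Finset.range l, f (T^[n] (x N))) / ((N₁ : ℝ) * (l : ℝ))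
        - ∫ y, f y ∂μ| < ε := by
  obtain ⟨δ₀, hδ₀, huc⟩ := Metric.uniformContinuous_iff.mp
    (CompactSpace.uniformContinuous_of_continuous f.continuous) (ε / 4) (by positivity)
  set M : ℝ := ‖f‖ with hM
  have hM0 : 0 ≤ M := norm_nonneg f
  refine ⟨min (δ₀ / 2) (ε / (4 * (M + 1))), lt_min (by positivity) (by positivity), ?_⟩
  set δ : ℝ := min (δ₀ / 2) (ε / (4 * (M + 1))) with hδdef
  have hδpos : 0 < δ := lt_min (by positivity) (by positivity)
  intro ι _ φ hφmeas hφdiam l N₁ hl hN₁ x a _ hfreq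
  have hN₁R : (0 : ℝ) < (N₁ : ℝ) := by exact_mod_cast Nat.lt_of_lt_of_le Nat.zero_lt_one hN₁
  have hlR : (0 : ℝ) < (l : ℝ) := by exact_mod_cast Nat.lt_of_lt_of_le Nat.zero_lt_one hl
  set g : X → ℝ := fun y => ∑ n ∈ Finset.range l, f (T^[n] y) with hg
  have hgc : Continuous g := by
    rw [hg]; exact continuous_finset_sum _ fun n _ => f.continuous.comp (hTc.iterate n)
  have hgint : Integrable g μ :=
    integrableOn_univ.mp (hgc.continuousOn.integrableOn_compact isCompact_univ)
  have hCmeas : ∀ w : Fin l → ι,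
      MeasurableSet {y : X | ∀ m : Fin l, φ (T^[(m : ℕ)] y) = w m} := by
    intro w
    have he : {y : X | ∀ m : Fin l, φ (T^[(m : ℕ)] y) = w m}
        = ⋂ m : Fin l, (T^[(m : ℕ)]) ⁻¹' (φ ⁻¹' {w m}) := by
      ext y; simp [Set.mem_iInter]
    rw [he]
    exact MeasurableSet.iInter fun m => (hφmeas (w m)).preimage (hTc.measurable.iterate _)
  have hdisj : Pairwise (Function.onFun Disjoint
      (fun w : Fin l → ι => {y : X | ∀ m : Fin l, φ (T^[(m : ℕ)] y) = w m})) := by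
    intro w w' hww
    simp only [Function.onFun, Set.disjoint_left]
    intro y hy hy'
    exact hww (funext fun m => (hy m).symm.trans (hy' m))
  have hcover : (⋃ w : Fin l → ι, {y : X | ∀ m : Fin l, φ (T^[(m : ℕ)] y) = w m})
      = Set.univ :=
    Set.eq_univ_of_forall fun y =>
      Set.mem_iUnion.mpr ⟨fun m => φ (T^[(m : ℕ)] y), fun m => rfl⟩
  have hosc : ∀ w : Fin l → ι, ∀ y ∈ {y : X | ∀ m : Fin l, φ (T^[(m : ℕ)] y) = w m},
      ∀ z ∈ {y : X | ∀ m : Fin l, φ (T^[(m : ℕ)] y) = w m},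
      |g y - g z| ≤ (l : ℝ) * (ε / 4) := by
    intro w y hy z hz
    simp only [hg]
    rw [← Finset.sum_sub_distrib]
    calc |∑ n ∈ Finset.range l, (f (T^[n] y) - f (T^[n] z))|
        ≤ ∑ n ∈ Finset.range l, |f (T^[n] y) - f (T^[n] z)| := Finset.abs_sum_le_sum_abs _ _
      _ ≤ ∑ _n ∈ Finset.range l, (ε / 4) := ?_
      _ = (l : ℝ) * (ε / 4) := by rw [Finset.sum_const, Finset.card_range, nsmul_eq_mul]
    refine Finset.sum_le_sum fun n hn => ?_
    have hnl : n < l := Finset.mem_range.mp hn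
    have h1 : T^[n] y ∈ φ ⁻¹' {w ⟨n, hnl⟩} := hy ⟨n, hnl⟩
    have h2 : T^[n] z ∈ φ ⁻¹' {w ⟨n, hnl⟩} := hz ⟨n, hnl⟩
    have hd : dist (T^[n] y) (T^[n] z) ≤ δ :=
      le_trans (Metric.dist_le_diam_of_mem Metric.isBounded_of_compactSpace h1 h2) (hφdiam _)
    have hd2 : dist (T^[n] y) (T^[n] z) < δ₀ :=
      lt_of_le_of_lt (hd.trans (min_le_left _ _)) (by linarith)
    have h3 := huc hd2
    rw [Real.dist_eq] at h3
    exact h3.le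
  have hgbd : ∀ y, |g y| ≤ (l : ℝ) * M := by
    intro y
    simp only [hg]
    calc |∑ n ∈ Finset.range l, f (T^[n] y)| ≤ ∑ n ∈ Finset.range l, |f (T^[n] y)| :=
        Finset.abs_sum_le_sum_abs _ _
      _ ≤ ∑ _n ∈ Finset.range l, M := Finset.sum_le_sum fun n _ => by
          rw [← Real.norm_eq_abs]; exact f.norm_coe_le_norm _
      _ = (l : ℝ) * M := by rw [Finset.sum_const, Finset.card_range, nsmul_eq_mul]
  set Kn : ℕ := ((Finset.univ : Finset (Fin l → ι)).filter
      (fun w' => Set.Nonempty {y : X | ∀ m : Fin l, φ (T^[(m : ℕ)] y) = w' m})).card with hKn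
  have hK1 : 1 ≤ Kn := by
    rw [hKn]
    exact Finset.card_pos.mpr ⟨fun m => φ (T^[(m : ℕ)] (x 1)), Finset.mem_filter.mpr
      ⟨Finset.mem_univ _, ⟨x 1, fun m => rfl⟩⟩⟩
  have hKR : (0 : ℝ) < (Kn : ℝ) := by exact_mod_cast Nat.lt_of_lt_of_le Nat.zero_lt_one hK1
  have hmain := auxSum μ
    (fun w : Fin l → ι => {y : X | ∀ m : Fin l, φ (T^[(m : ℕ)] y) = w m})
    hCmeas hdisj hcover g hgint N₁ hN₁R x (fun N => fun m : Fin l => φ (T^[(m : ℕ)] (x N)))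
    (fun N => fun m => rfl) ((l : ℝ) * (ε / 4)) (δ / (Kn : ℝ)) ((l : ℝ) * M)
    (by positivity) hosc hgbd
    (fun w => (((Finset.Icc 1 N₁).filter
        (fun N => ∀ m : Fin l, φ (T^[(m : ℕ)] (x N)) = w m)).card : ℝ))
    (by
      intro w
      beta_reduce
      norm_cast
      refine congrArg Finset.card ?_
      ext N
      simp [Finset.mem_filter, funext_iff])
    (fun w hw => (hfreq w hw).le)
  -- invariance
  have hmap : ∀ n : ℕ, μ.map (T^[n]) = μ := by
    intro n
    induction n with
    | zero => simp
    | succ n ih =>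
      rw [Function.iterate_succ', ← Measure.map_map hTc.measurable (hTc.measurable.iterate n),
        ih, hinv]
  have hintn : ∀ n : ℕ, Integrable (fun y => f (T^[n] y)) μ := fun n =>
    integrableOn_univ.mp
      ((f.continuous.comp (hTc.iterate n)).continuousOn.integrableOn_compact isCompact_univ)
  have hIg : ∫ y, g y ∂μ = (l : ℝ) * ∫ y, f y ∂μ := by
    simp only [hg]
    rw [integral_finset_sum _ (fun n _ => hintn n)]
    have h1 : ∀ n : ℕ, ∫ y, f (T^[n] y) ∂μ = ∫ y, f y ∂μ := by
      intro n
      conv_rhs => rw [← hmap n]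
      rw [integral_map (hTc.measurable.iterate n).aemeasurable f.continuous.aestronglyMeasurable]
    rw [Finset.sum_congr rfl fun n _ => h1 n, Finset.sum_const, Finset.card_range, nsmul_eq_mul]
  have hKeq : ((Finset.univ.filter (fun w : Fin l → ι =>
      Set.Nonempty {y : X | ∀ m : Fin l, φ (T^[(m : ℕ)] y) = w m})).card : ℝ) = (Kn : ℝ) := by
    rw [hKn]
  have hbound : |(∑ N ∈ Finset.Icc 1 N₁, g (x N)) - (N₁ : ℝ) * ∫ y, g y ∂μ|
      ≤ (N₁ : ℝ) * ((l : ℝ) * (ε / 4)) + (N₁ : ℝ) * ((l : ℝ) * (ε / 4))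
        + (N₁ : ℝ) * (δ * ((l : ℝ) * M)) := by
    have hc : (Kn : ℝ) * ((N₁ : ℝ) * ((δ / (Kn : ℝ)) * ((l : ℝ) * M)))
        = (N₁ : ℝ) * (δ * ((l : ℝ) * M)) := by
      field_simp
    calc |(∑ N ∈ Finset.Icc 1 N₁, g (x N)) - (N₁ : ℝ) * ∫ y, g y ∂μ|
        ≤ (N₁ : ℝ) * ((l : ℝ) * (ε / 4)) + (N₁ : ℝ) * ((l : ℝ) * (ε / 4))
          + ((Finset.univ.filter (fun w : Fin l → ι =>
              Set.Nonempty {y : X | ∀ m : Fin l, φ (T^[(m : ℕ)] y) = w m})).card : ℝ)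
            * ((N₁ : ℝ) * ((δ / (Kn : ℝ)) * ((l : ℝ) * M))) := hmain
      _ = (N₁ : ℝ) * ((l : ℝ) * (ε / 4)) + (N₁ : ℝ) * ((l : ℝ) * (ε / 4))
          + (N₁ : ℝ) * (δ * ((l : ℝ) * M)) := by rw [hKeq, hc]
  have hδM : δ * M ≤ ε / 4 := by
    have h1 : δ ≤ ε / (4 * (M + 1)) := min_le_right _ _
    have h2 : δ * M ≤ ε / (4 * (M + 1)) * M := mul_le_mul_of_nonneg_right h1 hM0
    calc δ * M ≤ ε / (4 * (M + 1)) * M := h2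
      _ ≤ ε / 4 := by
        rw [div_mul_eq_mul_div, div_le_div_iff₀ (by positivity) (by positivity)]
        nlinarith
  have hNl : (0 : ℝ) < (N₁ : ℝ) * (l : ℝ) := mul_pos hN₁R hlR
  have hEq : (∑ N ∈ Finset.Icc 1 N₁, ∑ n ∈ Finset.range l, f (T^[n] (x N)))
        / ((N₁ : ℝ) * (l : ℝ)) - ∫ y, f y ∂μ
      = ((∑ N ∈ Finset.Icc 1 N₁, g (x N)) - (N₁ : ℝ) * ∫ y, g y ∂μ)
        / ((N₁ : ℝ) * (l : ℝ)) := by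
    simp only [hg, hIg]
    field_simp
    rw [show (∫ y, ∑ n ∈ Finset.range l, f (T^[n] y) ∂μ) = (l : ℝ) * ∫ y, f y ∂μ from hIg]
    ring
  rw [hEq, abs_div, abs_of_pos hNl, div_lt_iff₀ hNl]
  calc |(∑ N ∈ Finset.Icc 1 N₁, g (x N)) - (N₁ : ℝ) * ∫ y, g y ∂μ|
      ≤ (N₁ : ℝ) * ((l : ℝ) * (ε / 4)) + (N₁ : ℝ) * ((l : ℝ) * (ε / 4))
        + (N₁ : ℝ) * (δ * ((l : ℝ) * M)) := hbound
    _ < ε * ((N₁ : ℝ) * (l : ℝ)) := by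
      nlinarith [mul_le_mul_of_nonneg_left hδM hNl.le, mul_pos hNl hε]
end
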